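/- arXiv:2601.18994 — 4 statements merged into one kernel-verified Lean document; each statement's English description precedes it below -/
import Mathlib

section
/- For every integer n ≥ 0 with m := nk/2 ∈ ℤ, A(n) = (2^{m+(c−2)/2} · Γ(m + c/2) / ((2π)^{c/2} · n!)) · ∫_{S^{c−1}} V(x)^n ω(dx), where ω is the standard surface (volume) measure on the unit sphere S^{c−1} ⊂ ℝ^c and Γ is the gamma function. -/
open MeasureTheory MvPolynomial

/-- `A(n)`: the `|Aut|⁻¹`-weighted count of `c`-edge-colored `k`-regular multigraphs on
`n` vertices with vertex weights given by the coefficients of `V`, expressed as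
`∑_{s, |s| = nk/2} (∏ i (2 sᵢ - 1)!!) · [x^{2s}] (V^n / n!)`. -/
noncomputable def Acount (c k : ℕ) (V : MvPolynomial (Fin c) ℝ) (n : ℕ) : ℝ :=
  ∑ s ∈ Finset.Nat.antidiagonalTuple c (n * k / 2),
    (∏ i, (Nat.doubleFactorial (2 * s i - 1) : ℝ)) *
      (MvPolynomial.coeff (Finsupp.equivFunOnFinite.symm fun i => 2 * s i) (V ^ n)
        / (Nat.factorial n : ℝ))

namespace StmtAux

open Real Set
open scoped Nat

lemma gamma_half (s : ℕ) :
    Real.Gamma ((s : ℝ) + 1/2) = ((2*s-1)‼ : ℝ) * Real.sqrt π / 2^s := by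
  induction s with
  | zero =>
    rw [show ((0:ℕ):ℝ) + 1/2 = 1/2 by norm_num, Real.Gamma_one_half_eq]
    norm_num [Nat.doubleFactorial]
  | succ s ih =>
    have h1 : ((s+1 : ℕ) : ℝ) + 1/2 = ((s:ℝ) + 1/2) + 1 := by push_cast; ring
    have h2 : (2*(s+1)-1)‼ = (2*s+1) * (2*s-1)‼ := by
      have h3 : 2*(s+1)-1 = 2*s+1 := by omega
      rw [h3, Nat.doubleFactorial_add_one]
    rw [h1, Real.Gamma_add_one (by positivity), ih, h2]
    push_cast
    field_simp
    ring

lemma integrable_pow_gauss (j : ℕ) :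
    Integrable (fun x : ℝ => x ^ j * Real.exp (-x^2/2)) := by
  have h := integrable_rpow_mul_exp_neg_mul_sq (b := 1/2) one_half_pos
    (s := (j : ℝ)) (by exact_mod_cast neg_one_lt_zero.trans_le (Nat.cast_nonneg j))
  have he : ∀ x : ℝ, -x^2/2 = -(1/2) * x^2 := fun x => by ring
  simp only [he]
  simpa [Real.rpow_natCast] using h

lemma moment_even (s : ℕ) :
    ∫ x : ℝ, x ^ (2*s) * Real.exp (-x^2/2) = ((2*s-1)‼ : ℝ) * Real.sqrt (2*π) := by
  have habs : (fun x : ℝ => x ^ (2*s) * Real.exp (-x^2/2))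
      = fun x : ℝ => |x| ^ (2*s) * Real.exp (-|x|^2/2) := by
    funext x
    simp [pow_mul, sq_abs]
  rw [habs, integral_comp_abs (f := fun x : ℝ => x ^ (2*s) * Real.exp (-x^2/2))]
  have hcongr : ∫ x in Ioi (0:ℝ), x ^ (2*s) * Real.exp (-x^2/2)
      = ∫ x in Ioi (0:ℝ), x ^ ((2*s : ℕ) : ℝ) * Real.exp (-(1/2) * x ^ (2:ℝ)) := by
    refine setIntegral_congr_fun measurableSet_Ioi (fun x hx => ?_)
    rw [Real.rpow_natCast, Real.rpow_two]
    ring_nf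
  rw [hcongr, integral_rpow_mul_exp_neg_mul_rpow two_pos
    (by exact_mod_cast neg_one_lt_zero.trans_le (Nat.cast_nonneg _)) one_half_pos]
  have h1 : (((2*s : ℕ) : ℝ) + 1) / 2 = (s : ℝ) + 1/2 := by push_cast; ring
  rw [h1, gamma_half]
  have h2 : ((1:ℝ)/2) ^ (-(((2*s : ℕ) : ℝ) + 1) / 2) = 2 ^ (s:ℕ) * Real.sqrt 2 := by
    rw [one_div, Real.inv_rpow (by norm_num), ← Real.rpow_neg (by norm_num),
      neg_div, neg_neg, h1, Real.rpow_add two_pos, Real.rpow_natCast,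
      Real.sqrt_eq_rpow]
  rw [h2]
  have h3 : Real.sqrt (2*π) = Real.sqrt 2 * Real.sqrt π :=
    Real.sqrt_mul (by norm_num) _
  rw [h3]
  have hs : (0:ℝ) < 2 ^ (s:ℕ) := by positivity
  field_simp

lemma moment_odd {j : ℕ} (hj : Odd j) :
    ∫ x : ℝ, x ^ j * Real.exp (-x^2/2) = 0 := by
  have h := integral_neg_eq_self (fun x : ℝ => x ^ j * Real.exp (-x^2/2))
    (volume : Measure ℝ)
  simp only [hj.neg_pow, neg_sq, neg_mul, integral_neg] at h
  linarith

lemma moment (j : ℕ) :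
    ∫ x : ℝ, x ^ j * Real.exp (-x^2/2)
      = (if Even j then ((j - 1)‼ : ℝ) else 0) * Real.sqrt (2*π) := by
  by_cases h : Even j
  · obtain ⟨t, ht⟩ := h
    rw [if_pos ⟨t, ht⟩, ht, show t + t = 2 * t from (two_mul t).symm, moment_even]
  · rw [if_neg h, zero_mul, moment_odd (Nat.not_even_iff_odd.mp h)]

lemma degree_eq_sum_univ {c : ℕ} (d : Fin c →₀ ℕ) : d.degree = ∑ i, d i := by
  rw [Finsupp.degree]
  exact Finset.sum_subset (Finset.subset_univ _)
    (fun i _ h => Finsupp.notMem_support_iff.mp h)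

lemma sum_eq_of_mem_support {c N : ℕ} {P : MvPolynomial (Fin c) ℝ}
    (hP : P.IsHomogeneous N) {d : Fin c →₀ ℕ} (hd : d ∈ P.support) :
    ∑ i, d i = N := by
  rw [← degree_eq_sum_univ]
  by_contra h
  exact (MvPolynomial.mem_support_iff.mp hd) (hP.coeff_eq_zero h)

lemma eval_smul_homog {c N : ℕ} {P : MvPolynomial (Fin c) ℝ}
    (hP : P.IsHomogeneous N) (r : ℝ) (x : Fin c → ℝ) :
    eval (fun i => r * x i) P = r ^ N * eval x P := by
  rw [eval_eq', eval_eq', Finset.mul_sum]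
  refine Finset.sum_congr rfl (fun d hd => ?_)
  have h1 : ∏ i, (r * x i) ^ d i = r ^ N * ∏ i, x i ^ d i := by
    rw [← sum_eq_of_mem_support hP hd]
    simp_rw [mul_pow]
    rw [Finset.prod_mul_distrib, Finset.prod_pow_eq_pow_sum]
  rw [h1]
  ring

lemma comb_step {c N : ℕ} {P : MvPolynomial (Fin c) ℝ} (hP : P.IsHomogeneous (2*N)) :
    ∑ d ∈ P.support, coeff d P * ∏ i, (if Even (d i) then ((d i - 1)‼ : ℝ) else 0)
      = ∑ s ∈ Finset.Nat.antidiagonalTuple c N,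
          (∏ i, ((2 * s i - 1)‼ : ℝ)) *
            coeff (Finsupp.equivFunOnFinite.symm fun i => 2 * s i) P := by
  classical
  set dbl : (Fin c → ℕ) → (Fin c →₀ ℕ) :=
    fun s => Finsupp.equivFunOnFinite.symm (fun i => 2 * s i) with hD
  have hDapp : ∀ s i, dbl s i = 2 * s i := fun s i => rfl
  set f : (Fin c →₀ ℕ) → ℝ :=
    fun d => coeff d P * ∏ i, (if Even (d i) then ((d i - 1)‼ : ℝ) else 0) with hf
  have hRHS : ∀ s : Fin c → ℕ,
      (∏ i, ((2 * s i - 1)‼ : ℝ)) * coeff (dbl s) P = f (dbl s) := by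
    intro s
    rw [hf, mul_comm]
    congr 1
    exact Finset.prod_congr rfl (fun i _ => by simp [hDapp, even_two_mul])
  calc
    ∑ d ∈ P.support, f d
        = ∑ d ∈ P.support.filter (fun d => ∀ i, Even (d i)), f d := by
      symm
      refine Finset.sum_filter_of_ne (fun d _ hfd i => ?_)
      by_contra hodd
      apply hfd
      have h0 : (if Even (d i) then ((d i - 1)‼ : ℝ) else 0) = 0 := by simp [hodd]
      simp only [hf]
      rw [Finset.prod_eq_zero (Finset.mem_univ i) h0, mul_zero]
    _ = ∑ s ∈ (Finset.Nat.antidiagonalTuple c N).filter (fun s => dbl s ∈ P.support),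
          f (dbl s) := by
      refine Finset.sum_nbij' (fun d => fun i => d i / 2) dbl ?_ ?_ ?_ ?_ ?_
      · intro d hd
        obtain ⟨hd1, hd2⟩ := Finset.mem_filter.mp hd
        have hdbl : dbl (fun i => d i / 2) = d := by
          ext i
          simp only [hDapp]
          exact Nat.mul_div_cancel' (hd2 i).two_dvd
        refine Finset.mem_filter.mpr ⟨?_, by rw [hdbl]; exact hd1⟩
        rw [Finset.Nat.mem_antidiagonalTuple]
        have h2 : 2 * ∑ i, d i / 2 = 2 * N := by
          rw [Finset.mul_sum]
          rw [Finset.sum_congr rfl (fun i _ => Nat.mul_div_cancel' (hd2 i).two_dvd)]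
          exact sum_eq_of_mem_support hP hd1
        show ∑ i, d i / 2 = N
        omega
      · intro s hs
        obtain ⟨hs1, hs2⟩ := Finset.mem_filter.mp hs
        exact Finset.mem_filter.mpr ⟨hs2, fun i => by rw [hDapp]; exact even_two_mul _⟩
      · intro d hd
        obtain ⟨hd1, hd2⟩ := Finset.mem_filter.mp hd
        ext i
        simp only [hDapp]
        exact Nat.mul_div_cancel' (hd2 i).two_dvd
      · intro s hs
        funext i
        simp only [hDapp]
        omega
      · intro d hd
        obtain ⟨hd1, hd2⟩ := Finset.mem_filter.mp hd
        have hdbl : dbl (fun i => d i / 2) = d := by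
          ext i
          simp only [hDapp]
          exact Nat.mul_div_cancel' (hd2 i).two_dvd
        exact (congrArg f hdbl).symm
    _ = ∑ s ∈ Finset.Nat.antidiagonalTuple c N, f (dbl s) := by
      refine Finset.sum_filter_of_ne (fun s _ hfs => ?_)
      by_contra hns
      exact hfs (mul_eq_zero_of_left (MvPolynomial.notMem_support_iff.mp hns) _)
    _ = ∑ s ∈ Finset.Nat.antidiagonalTuple c N,
          (∏ i, ((2 * s i - 1)‼ : ℝ)) * coeff (dbl s) P :=
      Finset.sum_congr rfl (fun s _ => (hRHS s).symm)

lemma claimA {c N : ℕ} (P : MvPolynomial (Fin c) ℝ) (hP : P.IsHomogeneous (2*N)) :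
    ∫ y : Fin c → ℝ, (eval y P) * ∏ i, Real.exp (-(y i)^2/2)
      = (∑ s ∈ Finset.Nat.antidiagonalTuple c N,
          (∏ i, ((2 * s i - 1)‼ : ℝ)) *
            coeff (Finsupp.equivFunOnFinite.symm fun i => 2 * s i) P)
        * Real.sqrt (2*π) ^ c := by
  classical
  have hfun : ∀ y : Fin c → ℝ, (eval y P) * ∏ i, Real.exp (-(y i)^2/2)
      = ∑ d ∈ P.support, coeff d P * ∏ i, (y i ^ d i * Real.exp (-(y i)^2/2)) := by
    intro y
    rw [eval_eq', Finset.sum_mul]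
    refine Finset.sum_congr rfl (fun d _ => ?_)
    rw [mul_assoc, ← Finset.prod_mul_distrib]
  simp_rw [hfun]
  rw [integral_finset_sum _ (fun d _ => ?_)]
  · have hterm : ∀ d ∈ P.support,
        (∫ y : Fin c → ℝ, coeff d P * ∏ i, (y i ^ d i * Real.exp (-(y i)^2/2)))
          = coeff d P *
              ∏ i, ((if Even (d i) then ((d i - 1)‼ : ℝ) else 0) * Real.sqrt (2*π)) := by
      intro d _
      rw [integral_const_mul, integral_fintype_prod_volume_eq_prod
        (f := fun i t => t ^ d i * Real.exp (-t^2/2))]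
      congr 1
      exact Finset.prod_congr rfl (fun i _ => moment (d i))
    rw [Finset.sum_congr rfl hterm]
    have hsplit : ∀ d : Fin c →₀ ℕ,
        (∏ i, ((if Even (d i) then ((d i - 1)‼ : ℝ) else 0) * Real.sqrt (2*π)))
          = (∏ i, (if Even (d i) then ((d i - 1)‼ : ℝ) else 0)) * Real.sqrt (2*π) ^ c := by
      intro d
      rw [Finset.prod_mul_distrib, Finset.prod_const, Finset.card_univ, Fintype.card_fin]
    simp_rw [hsplit]
    rw [← comb_step hP, Finset.sum_mul]
    exact Finset.sum_congr rfl (fun d _ => by ring)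
  · exact (Integrable.fintype_prod_dep (fun i => integrable_pow_gauss (d i))).const_mul _

lemma integral_volumeIoiPow (d : ℕ) (h : ℝ → ℝ) :
    ∫ x : Ioi (0:ℝ), h x ∂(Measure.volumeIoiPow d)
      = ∫ x in Ioi (0:ℝ), x ^ d * h x := by
  simp only [Measure.volumeIoiPow, ENNReal.ofReal]
  rw [integral_withDensity_eq_integral_smul
    ((measurable_subtype_coe.pow_const _).real_toNNReal),
    integral_subtype_comap measurableSet_Ioi
      (fun a : ℝ => Real.toNNReal (a ^ d) • h a),
    setIntegral_congr_fun measurableSet_Ioi (fun x hx => ?_)]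
  rw [NNReal.smul_def, Real.coe_toNNReal _ (pow_nonneg hx.out.le _), smul_eq_mul]

lemma claimB {c M : ℕ} (hc : 1 ≤ c) (P : MvPolynomial (Fin c) ℝ)
    (hP : P.IsHomogeneous M) :
    ∫ x : EuclideanSpace ℝ (Fin c), (eval (fun i => x i) P) * Real.exp (-‖x‖^2/2)
      = (∫ r in Ioi (0:ℝ), r ^ (M + c - 1) * Real.exp (-r^2/2)) *
          ∫ y : Metric.sphere (0 : EuclideanSpace ℝ (Fin c)) 1,
            eval (fun i => (y : EuclideanSpace ℝ (Fin c)) i) P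
            ∂((volume : Measure (EuclideanSpace ℝ (Fin c))).toSphere) := by
  classical
  set E := EuclideanSpace ℝ (Fin c) with hE
  haveI : Nonempty (Fin c) := ⟨⟨0, hc⟩⟩
  haveI : Nontrivial E := by
    refine ⟨0, EuclideanSpace.single ⟨0, hc⟩ (1:ℝ), fun h => ?_⟩
    have := congrArg (fun z : E => z ⟨0, hc⟩) h
    exact zero_ne_one this
  set F : E → ℝ := fun x => eval (fun i => x i) P * Real.exp (-‖x‖^2/2) with hF
  have hdim : Module.finrank ℝ E = c := finrank_euclideanSpace_fin
  calc
    ∫ x : E, F x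
        = ∫ x : ({0}ᶜ : Set E), F x ∂((volume : Measure E).comap Subtype.val) := by
      rw [integral_subtype_comap (measurableSet_singleton _).compl F,
        restrict_compl_singleton]
    _ = ∫ p : Metric.sphere (0:E) 1 × Ioi (0:ℝ),
          F ((homeomorphUnitSphereProd E).symm p)
          ∂((volume : Measure E).toSphere.prod
            (Measure.volumeIoiPow (Module.finrank ℝ E - 1))) := by
      rw [← (volume : Measure E).measurePreserving_homeomorphUnitSphereProd.integral_comp
        (Homeomorph.measurableEmbedding _)
        (fun p => F ((homeomorphUnitSphereProd E).symm p))]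
      simp only [Homeomorph.symm_apply_apply]
    _ = ∫ p : Metric.sphere (0:E) 1 × Ioi (0:ℝ),
          (eval (fun i => ((p.1 : E)) i) P) *
            ((p.2 : ℝ) ^ M * Real.exp (-(p.2:ℝ)^2/2))
          ∂((volume : Measure E).toSphere.prod
            (Measure.volumeIoiPow (Module.finrank ℝ E - 1))) := by
      refine integral_congr_ae (Filter.Eventually.of_forall (fun p => ?_))
      obtain ⟨⟨y, hy⟩, ⟨r, hr⟩⟩ := p
      have hy' : ‖y‖ = 1 := by simpa [mem_sphere_iff_norm] using hy
      have hcoe : ((homeomorphUnitSphereProd E).symm (⟨y, hy⟩, ⟨r, hr⟩) : E) = r • y := rfl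
      simp only [hF, hcoe]
      have h1 : ∀ i, (r • y) i = r * y i := fun i => rfl
      have h2 : ‖r • y‖ = r := by
        rw [norm_smul, hy', Real.norm_eq_abs, abs_of_pos hr.out, mul_one]
      rw [h2]
      have h3 : eval (fun i => (r • y) i) P = r ^ M * eval (fun i => y i) P := by
        simp only [h1]
        exact eval_smul_homog hP r _
      rw [h3]
      ring
    _ = (∫ y : Metric.sphere (0:E) 1, eval (fun i => ((y : E)) i) P
          ∂(volume : Measure E).toSphere) *
        ∫ r : Ioi (0:ℝ), ((r : ℝ) ^ M * Real.exp (-(r:ℝ)^2/2))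
          ∂(Measure.volumeIoiPow (Module.finrank ℝ E - 1)) := by
      exact integral_prod_mul
        (fun y : Metric.sphere (0:E) 1 => eval (fun i => ((y : E)) i) P)
        (fun r : Ioi (0:ℝ) => (r : ℝ) ^ M * Real.exp (-(r:ℝ)^2/2))
    _ = (∫ r in Ioi (0:ℝ), r ^ (M + c - 1) * Real.exp (-r^2/2)) *
          ∫ y : Metric.sphere (0:E) 1, eval (fun i => ((y : E)) i) P
            ∂(volume : Measure E).toSphere := by
      rw [mul_comm]
      congr 1
      rw [integral_volumeIoiPow (Module.finrank ℝ E - 1)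
        (fun x => x ^ M * Real.exp (-x^2/2)), hdim]
      refine setIntegral_congr_fun measurableSet_Ioi (fun x hx => ?_)
      rw [← mul_assoc, ← pow_add]
      congr 2
      omega

lemma radial_value {m c : ℕ} (hc : 1 ≤ c) :
    ∫ r in Ioi (0:ℝ), r ^ (2*m + c - 1) * Real.exp (-r^2/2)
      = (2:ℝ) ^ ((m:ℝ) + ((c:ℝ) - 2)/2) * Real.Gamma ((m:ℝ) + (c:ℝ)/2) := by
  have hcongr : ∫ r in Ioi (0:ℝ), r ^ (2*m + c - 1) * Real.exp (-r^2/2)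
      = ∫ r in Ioi (0:ℝ), r ^ ((2*m + c - 1 : ℕ) : ℝ) * Real.exp (-(1/2) * r ^ (2:ℝ)) := by
    refine setIntegral_congr_fun measurableSet_Ioi (fun x hx => ?_)
    rw [Real.rpow_natCast, Real.rpow_two]
    ring_nf
  rw [hcongr, integral_rpow_mul_exp_neg_mul_rpow two_pos
    (by exact_mod_cast neg_one_lt_zero.trans_le (Nat.cast_nonneg _)) one_half_pos]
  have h1 : ((2*m + c - 1 : ℕ) : ℝ) + 1 = 2*(m:ℝ) + c := by
    have : (2*m + c - 1) + 1 = 2*m + c := by omega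
    rw [← Nat.cast_one (R := ℝ), ← Nat.cast_add, this]
    push_cast
    ring
  have h2 : (((2*m + c - 1 : ℕ) : ℝ) + 1) / 2 = (m:ℝ) + (c:ℝ)/2 := by
    rw [h1]; ring
  rw [h2]
  have h3 : ((1:ℝ)/2) ^ (-(((2*m + c - 1 : ℕ) : ℝ) + 1) / 2)
      = (2:ℝ) ^ ((m:ℝ) + (c:ℝ)/2) := by
    rw [one_div, Real.inv_rpow (by norm_num), ← Real.rpow_neg (by norm_num),
      neg_div, neg_neg, h2]
  rw [h3]
  have h4 : (2:ℝ) ^ ((m:ℝ) + ((c:ℝ) - 2)/2)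
      = (2:ℝ) ^ ((m:ℝ) + (c:ℝ)/2) * (1/2) := by
    rw [show (m:ℝ) + ((c:ℝ) - 2)/2 = ((m:ℝ) + (c:ℝ)/2) - 1 by ring,
      Real.rpow_sub two_pos, Real.rpow_one]
    ring
  rw [h4]
  try ring

lemma sqrt_two_pi_pow (c : ℕ) :
    Real.sqrt (2*π) ^ c = (2*π) ^ ((c:ℝ)/2) := by
  rw [Real.sqrt_eq_rpow, ← Real.rpow_natCast ((2*π) ^ ((1:ℝ)/2)) c,
    ← Real.rpow_mul (by positivity)]
  congr 1
  ring

end StmtAux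

open scoped Nat in
open StmtAux Real Set in
theorem stmt_1 (k c : ℕ) (hk : 3 ≤ k) (hc : 1 ≤ c)
    (V : MvPolynomial (Fin c) ℝ) (hV : V.IsHomogeneous k)
    (n : ℕ) (hn : 2 ∣ n * k) :
    Acount c k V n =
      (2 : ℝ) ^ (((n * k / 2 : ℕ) : ℝ) + ((c : ℝ) - 2) / 2) *
        Real.Gamma (((n * k / 2 : ℕ) : ℝ) + (c : ℝ) / 2) /
        ((2 * Real.pi) ^ ((c : ℝ) / 2) * (Nat.factorial n : ℝ)) *
      ∫ x : Metric.sphere (0 : EuclideanSpace ℝ (Fin c)) 1,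
        (MvPolynomial.eval (fun i => (x : EuclideanSpace ℝ (Fin c)) i) V) ^ n
        ∂((volume : Measure (EuclideanSpace ℝ (Fin c))).toSphere) := by
  classical
  set m : ℕ := n * k / 2 with hm
  have hm2 : 2 * m = n * k := Nat.mul_div_cancel' hn
  set P : MvPolynomial (Fin c) ℝ := V ^ n with hP
  have hPhom : P.IsHomogeneous (2 * m) := by
    rw [hm2, hP, show n * k = k * n from mul_comm n k]
    exact hV.pow n
  set E := EuclideanSpace ℝ (Fin c) with hE
  set S : ℝ := ∫ x : Metric.sphere (0 : E) 1,
      (MvPolynomial.eval (fun i => (x : E) i) V) ^ n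
      ∂((volume : Measure E).toSphere) with hS
  -- sphere integrand for P equals that for V^n
  have hSP : (∫ y : Metric.sphere (0 : E) 1,
      eval (fun i => (y : E) i) P ∂((volume : Measure E).toSphere)) = S := by
    rw [hS]
    refine integral_congr_ae (Filter.Eventually.of_forall (fun y => ?_))
    simp only [hP, map_pow]
  -- bridge: Euclidean integral = pi integral
  have hbridge : ∫ x : E, (eval (fun i => x i) P) * Real.exp (-‖x‖^2/2)
      = ∫ y : Fin c → ℝ, (eval y P) * ∏ i, Real.exp (-(y i)^2/2) := by
    rw [← ((EuclideanSpace.volume_preserving_symm_measurableEquiv_toLp (Fin c)).symm).integral_comp'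
      (fun x : E => (eval (fun i => x i) P) * Real.exp (-‖x‖^2/2))]
    refine integral_congr_ae (Filter.Eventually.of_forall (fun y => ?_))
    have hcoords : ∀ i, ((MeasurableEquiv.toLp 2 (Fin c → ℝ)).symm.symm y) i = y i :=
      fun i => rfl
    have hnorm : ‖(MeasurableEquiv.toLp 2 (Fin c → ℝ)).symm.symm y‖^2 = ∑ i, (y i)^2 := by
      rw [EuclideanSpace.norm_eq, Real.sq_sqrt (by positivity)]
      exact Finset.sum_congr rfl (fun i _ => by rw [hcoords, Real.norm_eq_abs, sq_abs])
    simp only [hcoords, hnorm]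
    congr 1
    rw [← Real.exp_sum]
    congr 1
    rw [show ∀ z : Fin c → ℝ, (∑ i, -z i ^ 2 / 2) = (∑ i, -z i ^ 2)/2 from
      fun z => (Finset.sum_div _ _ _).symm, Finset.sum_neg_distrib, neg_div]
  -- combine claim A and claim B
  have hA := claimA (N := m) P hPhom
  have hB := claimB hc P (M := 2*m) hPhom
  rw [hbridge] at hB
  rw [hA, hSP] at hB
  have hrad := radial_value (m := m) (c := c) hc
  rw [hrad] at hB
  -- identify the antidiagonal sum with Acount * n!
  have hfact : ((n.factorial : ℝ)) ≠ 0 := Nat.cast_ne_zero.mpr n.factorial_ne_zero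
  have hAc : Acount c k V n * (n.factorial : ℝ)
      = ∑ s ∈ Finset.Nat.antidiagonalTuple c m,
          (∏ i, ((2 * s i - 1)‼ : ℝ)) *
            coeff (Finsupp.equivFunOnFinite.symm fun i => 2 * s i) P := by
    simp only [Acount]
    rw [Finset.sum_mul]
    exact Finset.sum_congr rfl (fun s _ => by
      rw [mul_assoc, div_mul_cancel₀ _ hfact])
  rw [← hAc] at hB
  have hsqrt := sqrt_two_pi_pow c
  rw [hsqrt] at hB
  have hDpos : (0:ℝ) < (2*π) ^ ((c:ℝ)/2) := Real.rpow_pos_of_pos (by positivity) _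
  have hfactpos : (0:ℝ) < (n.factorial : ℝ) := Nat.cast_pos.mpr n.factorial_pos
  rw [div_mul_eq_mul_div, eq_div_iff (by positivity)]
  linear_combination hB
end

section
/- Assume max_{x ∈ S^{c−1}} |V(x)| > 0. Then: (i) for every z ∈ Ψ, writing z = τ·x with τ ∈ ℂ∖{0} and x ∈ S^{c−1}, either x ∈ Φ or −x ∈ Φ; and (ii) for every x ∈ Φ, the set {z ∈ Ψ : z = τ·x or z = τ·(−x) for some τ ∈ ℂ∖{0}} has exactly k−2 elements. Equivalently, the map ν : Ψ → Φ/∼ (where ∼ identifies antipodal points), sending z = τ·x to the class of x, is well-defined and surjective, and every fiber of ν has cardinality k−2. -/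
open MvPolynomial

/-- `g(x) = -(x₁² + ⋯ + x_c²)/2 + V(x)`, extended to a polynomial over `ℂ`. -/
noncomputable def gC (c : ℕ) (V : MvPolynomial (Fin c) ℝ) : MvPolynomial (Fin c) ℂ :=
  MvPolynomial.map (algebraMap ℝ ℂ)
    (-(MvPolynomial.C (1 / 2 : ℝ) * ∑ i, MvPolynomial.X i ^ 2) + V)

/-- Critical points of `g` in the complex cone over the unit sphere `S^{c-1}`. -/
def critStar (c : ℕ) (V : MvPolynomial (Fin c) ℝ) : Set (Fin c → ℂ) :=
  {z | (∀ i, MvPolynomial.eval z (MvPolynomial.pderiv i (gC c V)) = 0) ∧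
    ∃ (τ : ℂ) (x : Fin c → ℝ), τ ≠ 0 ∧ (∑ i, x i ^ 2) = 1 ∧ z = fun i => τ * (x i : ℂ)}

/-- Points `z = τ·x` of `critStar` with `|τ|` minimal; since `|τ|² = ∑ |zᵢ|²`,
minimality of `|τ|` is expressed via the norm of `z`. -/
def PsiSet (c : ℕ) (V : MvPolynomial (Fin c) ℝ) : Set (Fin c → ℂ) :=
  {z ∈ critStar c V | ∀ w ∈ critStar c V,
    ∑ i, ‖z i‖ ^ 2 ≤ ∑ i, ‖w i‖ ^ 2}

/-- The set of global maximizers of `x ↦ |V(x)|` on the unit sphere `S^{c-1}`. -/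
def PhiSet (c : ℕ) (V : MvPolynomial (Fin c) ℝ) : Set (Fin c → ℝ) :=
  {x | (∑ i, x i ^ 2) = 1 ∧
    ∀ y : Fin c → ℝ, (∑ i, y i ^ 2) = 1 →
      |MvPolynomial.eval y V| ≤ |MvPolynomial.eval x V|}

/-! ### Auxiliary lemmas -/

lemma eval_map_coe {c : ℕ} (p : MvPolynomial (Fin c) ℝ) (x : Fin c → ℝ) :
    eval (fun i => (x i : ℂ)) (map (algebraMap ℝ ℂ) p) = ((eval x p : ℝ) : ℂ) := by
  rw [eval_map]
  exact (eval₂_comp_left (algebraMap ℝ ℂ) (RingHom.id ℝ) x p).symm.trans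
    (by rw [eval₂_id]; rfl)

lemma degsum {c n : ℕ} {d : Fin c →₀ ℕ} (h : (Finsupp.weight 1) d = n) : ∑ i, d i = n := by
  rw [← h, Finsupp.weight_apply, Finsupp.sum_fintype]
  · simp
  · intro i; simp

lemma eval_mul_of_homogeneous {c n : ℕ} (p : MvPolynomial (Fin c) ℂ) (hp : p.IsHomogeneous n)
    (t : ℂ) (y : Fin c → ℂ) :
    eval (fun i => t * y i) p = t ^ n * eval y p := by
  conv_lhs => rw [← p.support_sum_monomial_coeff]
  conv_rhs => rw [← p.support_sum_monomial_coeff]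
  rw [map_sum, map_sum, Finset.mul_sum]
  refine Finset.sum_congr rfl fun d hd => ?_
  have hdeg : ∑ i, d i = n := degsum (hp (mem_support_iff.mp hd))
  rw [eval_monomial, eval_monomial]
  rw [Finsupp.prod_fintype _ _ (fun i => pow_zero _), Finsupp.prod_fintype _ _ (fun i => pow_zero _)]
  simp_rw [mul_pow]
  rw [Finset.prod_mul_distrib, Finset.prod_pow_eq_pow_sum, hdeg]; ring

lemma degree_eq_sum {c : ℕ} (d : Fin c →₀ ℕ) : d.degree = ∑ i, d i := by
  rw [Finsupp.degree_eq_weight_one, Finsupp.weight_apply, Finsupp.sum_fintype]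
  · simp
  · intro i; simp

lemma pderiv_isHomogeneous {c n : ℕ} {p : MvPolynomial (Fin c) ℝ} (hp : p.IsHomogeneous n)
    (i : Fin c) : (pderiv i p).IsHomogeneous (n - 1) := by
  conv_lhs => rw [← p.support_sum_monomial_coeff]
  rw [map_sum]
  refine IsHomogeneous.sum _ _ _ fun d hd => ?_
  rw [pderiv_monomial]
  rcases Nat.eq_zero_or_pos (d i) with h0 | h0
  · rw [h0]; simpa using isHomogeneous_zero _ _ (n-1)
  · refine isHomogeneous_monomial _ ?_
    have hdeg : ∑ j, d j = n := by
      have := hp (mem_support_iff.mp hd)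
      rw [← degree_eq_sum, Finsupp.degree_eq_weight_one]; exact this
    rw [degree_eq_sum]
    have e1 : ∑ j, ((d - Finsupp.single i 1) : Fin c →₀ ℕ) j
        = (d i - 1) + ∑ j ∈ Finset.univ.erase i, d j := by
      rw [← Finset.add_sum_erase _ _ (Finset.mem_univ i)]
      congr 1
      · rw [Finsupp.tsub_apply, Finsupp.single_eq_same]
      · exact Finset.sum_congr rfl fun j hj => by
          rw [Finsupp.tsub_apply, Finsupp.single_eq_of_ne' (Finset.ne_of_mem_erase hj).symm,
            Nat.sub_zero]
    have e2 : d i + ∑ j ∈ Finset.univ.erase i, d j = n := by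
      rw [Finset.add_sum_erase _ _ (Finset.mem_univ i)]; exact hdeg
    omega

lemma euler_identity {c n : ℕ} {p : MvPolynomial (Fin c) ℝ} (hp : p.IsHomogeneous n)
    (x : Fin c → ℝ) : ∑ i, x i * eval x (pderiv i p) = n * eval x p := by
  have key : ∀ (d : Fin c →₀ ℕ) (a : ℝ), (Finsupp.weight 1) d = n →
      ∑ i, x i * eval x (pderiv i (monomial d a)) = n * eval x (monomial d a) := by
    intro d a hd
    have hdeg : ∑ j, d j = n := degsum hd
    have term : ∀ i, x i * eval x (pderiv i (monomial d a)) = (d i : ℝ) * eval x (monomial d a) := by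
      intro i
      rw [pderiv_monomial, eval_monomial, eval_monomial,
        Finsupp.prod_fintype _ _ (fun j => pow_zero _),
        Finsupp.prod_fintype _ _ (fun j => pow_zero _)]
      rcases Nat.eq_zero_or_pos (d i) with h0 | h0
      · rw [h0]; simp
      · have hxi : x i * x i ^ (d i - 1) = x i ^ d i := by
          conv_rhs => rw [← Nat.sub_add_cancel h0, pow_succ]
          exact mul_comm _ _
        have hP1 : ∏ j, x j ^ (((d - Finsupp.single i 1) : Fin c →₀ ℕ) j)
            = x i ^ (d i - 1) * ∏ j ∈ Finset.univ.erase i, x j ^ d j := by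
          rw [← Finset.mul_prod_erase _ _ (Finset.mem_univ i)]
          congr 1
          · rw [Finsupp.tsub_apply, Finsupp.single_eq_same]
          · exact Finset.prod_congr rfl fun j hj => by
              rw [Finsupp.tsub_apply, Finsupp.single_eq_of_ne' (Finset.ne_of_mem_erase hj).symm,
                Nat.sub_zero]
        have hP2 : ∏ j, x j ^ d j = x i ^ d i * ∏ j ∈ Finset.univ.erase i, x j ^ d j :=
          (Finset.mul_prod_erase _ _ (Finset.mem_univ i)).symm
        rw [hP1, hP2, ← hxi]; ring
    rw [Finset.sum_congr rfl (fun i _ => term i), ← Finset.sum_mul, ← Nat.cast_sum, hdeg]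
  conv_lhs => rw [← p.support_sum_monomial_coeff]
  conv_rhs => rw [← p.support_sum_monomial_coeff]
  simp_rw [map_sum, Finset.mul_sum]
  rw [Finset.sum_comm]
  refine Finset.sum_congr rfl fun d hd => ?_
  exact key d _ (hp (mem_support_iff.mp hd))

lemma hasStrictFDerivAt_eval {c : ℕ} (p : MvPolynomial (Fin c) ℝ) (x : Fin c → ℝ) :
    HasStrictFDerivAt (fun y : Fin c → ℝ => eval y p)
      (∑ i, eval x (pderiv i p) • (ContinuousLinearMap.proj i : (Fin c → ℝ) →L[ℝ] ℝ)) x := by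
  induction p using MvPolynomial.induction_on with
  | C a =>
    have : (∑ i, eval x (pderiv i (C a : MvPolynomial (Fin c) ℝ)) • (ContinuousLinearMap.proj i :
        (Fin c → ℝ) →L[ℝ] ℝ)) = 0 := by simp [pderiv_C]
    rw [this]
    simpa using hasStrictFDerivAt_const (a : ℝ) x
  | add p q hp hq =>
    have : HasStrictFDerivAt (fun y : Fin c → ℝ => eval y p + eval y q) _ x := hp.add hq
    simp only [← eval_add] at this
    refine this.congr_fderiv ?_
    simp [add_smul, Finset.sum_add_distrib]
  | mul_X p i hp =>
    have hXi : HasStrictFDerivAt (fun y : Fin c → ℝ => y i)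
        (ContinuousLinearMap.proj i : (Fin c → ℝ) →L[ℝ] ℝ) x :=
      (ContinuousLinearMap.proj i : (Fin c → ℝ) →L[ℝ] ℝ).hasStrictFDerivAt
    have hmul : HasStrictFDerivAt (fun y : Fin c → ℝ => eval y p * y i) _ x := hp.mul hXi
    have heq : (fun y : Fin c → ℝ => eval y p * y i) = fun y => eval y (p * X i) := by
      funext y; simp
    rw [heq] at hmul
    refine hmul.congr_fderiv (Eq.symm ?_)
    have hpx : ∀ j, eval x (pderiv j (X i : MvPolynomial (Fin c) ℝ)) =
        if j = i then 1 else 0 := by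
      intro j
      rcases eq_or_ne j i with rfl | h
      · simp [pderiv_X_self]
      · simp [pderiv_X_of_ne h.symm, h]
    refine ContinuousLinearMap.ext fun v => ?_
    simp only [ContinuousLinearMap.sum_apply, ContinuousLinearMap.smul_apply,
      ContinuousLinearMap.proj_apply, ContinuousLinearMap.add_apply, ContinuousLinearMap.coe_smul',
      Pi.smul_apply, smul_eq_mul, pderiv_mul, map_add, map_mul, eval_X, hpx]
    have key : ∀ j, (eval x (pderiv j p) * x i + eval x p * if j = i then 1 else 0) * v j
        = eval x (pderiv j p) * x i * v j + (if j = i then eval x p * v j else 0) := by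
      intro j; split <;> ring
    rw [Finset.sum_congr rfl fun j _ => key j, Finset.sum_add_distrib,
      Finset.sum_ite_eq' Finset.univ i (fun j => eval x p * v j)]
    simp only [Finset.mem_univ, if_true, Finset.mul_sum]
    rw [add_comm]
    congr 1
    exact Finset.sum_congr rfl fun j _ => by ring

lemma continuous_eval_poly {c : ℕ} (p : MvPolynomial (Fin c) ℝ) :
    Continuous (fun y : Fin c → ℝ => eval y p) :=
  continuous_iff_continuousAt.mpr fun x => (hasStrictFDerivAt_eval p x).continuousAt

lemma lagrange {k c : ℕ} {V : MvPolynomial (Fin c) ℝ} (hV : V.IsHomogeneous k)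
    {x : Fin c → ℝ} (hx1 : (∑ i, x i ^ 2) = 1)
    (hmax : ∀ y : Fin c → ℝ, (∑ i, y i ^ 2) = 1 → |eval y V| ≤ |eval x V|)
    (hVx : eval x V ≠ 0) (j : Fin c) :
    eval x (pderiv j V) = k * eval x V * x j := by
  classical
  set Q : MvPolynomial (Fin c) ℝ := ∑ i, X i ^ 2 with hQ
  have hQeval : ∀ y : Fin c → ℝ, eval y Q = ∑ i, y i ^ 2 := by intro y; simp [hQ]
  have hQd : ∀ i, eval x (pderiv i Q) = 2 * x i := by
    intro i
    rw [hQ, map_sum, map_sum]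
    have : ∀ l, eval x (pderiv i ((X l : MvPolynomial (Fin c) ℝ) ^ 2)) =
        if l = i then 2 * x i else 0 := by
      intro l
      rcases eq_or_ne l i with rfl | h
      · simp [pderiv_pow, pderiv_X_self]; try ring
      · simp [pderiv_pow, pderiv_X_of_ne h, h]
    rw [Finset.sum_congr rfl fun l _ => this l, Finset.sum_ite_eq' Finset.univ i]
    simp
  have hf' : HasStrictFDerivAt (fun y : Fin c → ℝ => eval y Q)
      (∑ i, (2 * x i) • (ContinuousLinearMap.proj i : (Fin c → ℝ) →L[ℝ] ℝ)) x := by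
    have h := hasStrictFDerivAt_eval Q x
    simp_rw [hQd] at h; exact h
  have hφ' := hasStrictFDerivAt_eval V x
  have hsphere : {y : Fin c → ℝ | eval y Q = eval x Q} = {y | ∑ i, y i ^ 2 = 1} := by
    ext y; simp [hQeval, hx1]
  have hextr : IsLocalExtrOn (fun y : Fin c → ℝ => eval y V)
      {y | eval y Q = eval x Q} x := by
    rw [hsphere]
    rcases lt_or_gt_of_ne hVx with hneg | hpos
    · refine Or.inl (IsMinOn.localize ?_)
      intro y hy
      have := hmax y hy
      have hx : |eval x V| = -(eval x V) := abs_of_neg hneg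
      simp only [Set.mem_setOf_eq]
      have : -(eval y V) ≤ -(eval x V) := le_trans (neg_le_abs _) (hx ▸ this)
      simpa using by linarith [this]
    · refine Or.inr (IsMaxOn.localize ?_)
      intro y hy
      have := hmax y hy
      have hx : |eval x V| = eval x V := abs_of_pos hpos
      exact le_trans (le_abs_self _) (hx ▸ this)
  obtain ⟨a, b, hab, heq⟩ :=
    hextr.exists_multipliers_of_hasStrictFDerivAt_1d hf' hφ'
  have happ : ∀ l : Fin c, a * (2 * x l) + b * eval x (pderiv l V) = 0 := by
    intro l
    have := congrFun (congrArg (fun L => (L : (Fin c → ℝ) → ℝ)) (congrArg DFunLike.coe heq))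
      (Pi.single l 1)
    simp only [ContinuousLinearMap.add_apply, ContinuousLinearMap.coe_smul',
      Pi.smul_apply, ContinuousLinearMap.sum_apply, ContinuousLinearMap.smul_apply,
      ContinuousLinearMap.proj_apply, ContinuousLinearMap.zero_apply, smul_eq_mul] at this
    simp only [Pi.single_apply, mul_ite, mul_one, mul_zero,
      Finset.sum_ite_eq' Finset.univ, Finset.mem_univ, if_true] at this
    linarith [this]
  have hb : b ≠ 0 := by
    intro hb0
    have ha : a ≠ 0 := by
      intro ha0; exact hab (by simp [ha0, hb0, Prod.ext_iff])
    have hx0 : ∀ l, x l = 0 := by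
      intro l
      have := happ l
      rw [hb0, zero_mul, add_zero] at this
      have : 2 * x l = 0 := by
        rcases mul_eq_zero.mp this with h | h
        · exact absurd h ha
        · exact h
      linarith
    have : (∑ i, x i ^ 2) = 0 := by simp [hx0]
    rw [hx1] at this; norm_num at this
  have hlam : ∀ l, eval x (pderiv l V) = (-(2 * a) / b) * x l := by
    intro l
    have := happ l
    field_simp
    linarith [happ l]
  have hsum : ∑ l, x l * eval x (pderiv l V) = -(2 * a) / b := by
    rw [Finset.sum_congr rfl fun l _ => by rw [hlam l]]
    have : ∑ l, x l * ((-(2*a)/b) * x l) = (-(2*a)/b) * ∑ l, x l ^ 2 := by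
      rw [Finset.mul_sum]; exact Finset.sum_congr rfl fun l _ => by ring
    rw [this, hx1, mul_one]
  have heuler := euler_identity hV x
  rw [hsum] at heuler
  rw [hlam j, ← heuler]

lemma eval_pderiv_gC {c : ℕ} (V : MvPolynomial (Fin c) ℝ) (i : Fin c) (z : Fin c → ℂ) :
    eval z (pderiv i (gC c V)) = -z i + eval z (map (algebraMap ℝ ℂ) (pderiv i V)) := by
  classical
  rw [gC, pderiv_map]
  have hpd : pderiv i (-(C (1 / 2 : ℝ) * ∑ j, X j ^ 2) + V) = -X i + pderiv i V := by
    rw [map_add, map_neg, pderiv_C_mul]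
    congr 1
    have : pderiv i (∑ j, (X j : MvPolynomial (Fin c) ℝ) ^ 2) = 2 * X i := by
      rw [map_sum]
      have key : ∀ j, pderiv i ((X j : MvPolynomial (Fin c) ℝ) ^ 2) =
          if j = i then 2 * X i else 0 := by
        intro j
        rcases eq_or_ne j i with rfl | h
        · rw [pderiv_pow, pderiv_X_self]; simp
        · rw [pderiv_pow, pderiv_X_of_ne h]; simp [h]
      rw [Finset.sum_congr rfl fun j _ => key j, Finset.sum_ite_eq' Finset.univ i]
      simp
    rw [this]
    have h2 : (2 : MvPolynomial (Fin c) ℝ) = C 2 := (map_ofNat C 2).symm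
    rw [← mul_assoc, h2, ← C_mul]
    norm_num
  rw [hpd]
  rw [map_add, map_neg, map_X, map_add, map_neg, eval_X]

lemma crit_mem_iff {k c : ℕ} (hk : 3 ≤ k) {V : MvPolynomial (Fin c) ℝ} (hV : V.IsHomogeneous k)
    {τ : ℂ} (hτ : τ ≠ 0) {x : Fin c → ℝ} (hx1 : (∑ i, x i ^ 2) = 1) :
    (fun i => τ * (x i : ℂ)) ∈ critStar c V ↔
      ((∀ i, eval x (pderiv i V) = k * eval x V * x i) ∧
        τ ^ (k - 2) * ((k : ℂ) * ((eval x V : ℝ) : ℂ)) = 1) := by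
  have hk1 : k - 1 = (k - 2) + 1 := by omega
  have heval : ∀ i, eval (fun j => τ * (x j : ℂ)) (pderiv i (gC c V))
      = -(τ * x i) + τ ^ (k - 1) * ((eval x (pderiv i V) : ℝ) : ℂ) := by
    intro i
    rw [eval_pderiv_gC]
    congr 1
    rw [eval_mul_of_homogeneous _ ((pderiv_isHomogeneous hV i).map _) τ (fun j => (x j : ℂ)),
      eval_map_coe]
  constructor
  · rintro ⟨hcrit, -⟩
    have key : ∀ i, τ ^ (k - 2) * ((eval x (pderiv i V) : ℝ) : ℂ) = (x i : ℂ) := by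
      intro i
      have h := hcrit i
      rw [heval i] at h
      have h2 : τ * (τ ^ (k - 2) * ((eval x (pderiv i V) : ℝ) : ℂ)) = τ * (x i : ℂ) := by
        rw [hk1, pow_succ] at h
        linear_combination h
      exact mul_left_cancel₀ hτ h2
    have hsum : τ ^ (k - 2) * ((k : ℂ) * ((eval x V : ℝ) : ℂ)) = 1 := by
      have e1 : ∑ i, (x i : ℂ) * (τ ^ (k - 2) * ((eval x (pderiv i V) : ℝ) : ℂ))
          = ∑ i, ((x i : ℂ)) ^ 2 := Finset.sum_congr rfl fun i _ => by rw [key i]; ring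
      have e2 : ∑ i, (x i : ℂ) * (τ ^ (k - 2) * ((eval x (pderiv i V) : ℝ) : ℂ))
          = τ ^ (k - 2) * ((∑ i, x i * eval x (pderiv i V) : ℝ) : ℂ) := by
        push_cast
        rw [Finset.mul_sum]
        exact Finset.sum_congr rfl fun i _ => by ring
      have e3 : (∑ i, ((x i : ℂ)) ^ 2) = 1 := by
        norm_cast
      rw [e2, euler_identity hV x] at e1
      rw [e3] at e1
      push_cast at e1 ⊢
      linear_combination e1
    refine ⟨fun i => ?_, hsum⟩
    have hτk : τ ^ (k - 2) ≠ 0 := pow_ne_zero _ hτ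
    have hC : ((k : ℂ) * ((eval x V : ℝ) : ℂ)) ≠ 0 := by
      intro h0; rw [h0, mul_zero] at hsum; exact one_ne_zero hsum.symm
    have hmain : ((eval x (pderiv i V) : ℝ) : ℂ) = ((k : ℂ) * ((eval x V : ℝ) : ℂ)) * (x i : ℂ) := by
      have h1 := key i
      have h2 : τ ^ (k - 2) * (((k : ℂ) * ((eval x V : ℝ) : ℂ)) * (x i : ℂ))
          = τ ^ (k - 2) * ((eval x (pderiv i V) : ℝ) : ℂ) := by
        rw [h1]
        linear_combination (x i : ℂ) * hsum
      exact (mul_left_cancel₀ hτk h2).symm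
    push_cast at hmain
    exact_mod_cast hmain
  · rintro ⟨hlag, hτeq⟩
    refine ⟨fun i => ?_, τ, x, hτ, hx1, rfl⟩
    rw [heval i, hk1, pow_succ]
    push_cast [hlag i]
    linear_combination τ * (x i : ℂ) * hτeq

lemma sum_abs_sq {c : ℕ} (τ : ℂ) (x : Fin c → ℝ) (hx1 : (∑ i, x i ^ 2) = 1) :
    ∑ i, ‖τ * (x i : ℂ)‖ ^ 2 = ‖τ‖ ^ 2 := by
  have h : ∀ i, ‖τ * (x i : ℂ)‖ ^ 2 = ‖τ‖ ^ 2 * x i ^ 2 := by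
    intro i; rw [norm_mul, Complex.norm_real, Real.norm_eq_abs, mul_pow, sq_abs]
  rw [Finset.sum_congr rfl fun i _ => h i, ← Finset.mul_sum, hx1, mul_one]

lemma abs_clause {k : ℕ} {τ : ℂ} {v : ℝ} (h : τ ^ (k - 2) * ((k : ℂ) * (v : ℂ)) = 1) :
    ‖τ‖ ^ (k - 2) * ((k : ℝ) * |v|) = 1 := by
  have := congrArg (‖·‖) h
  rw [norm_mul, norm_pow, norm_mul, Complex.norm_real, Real.norm_eq_abs, Complex.norm_natCast, norm_one] at this
  exact this

lemma ncard_pow_eq {n : ℕ} (hn : 1 ≤ n) {a : ℂ} (ha : a ≠ 0) :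
    Set.ncard {τ : ℂ | τ ^ n = a} = n := by
  obtain ⟨τ₀, hτ₀⟩ := IsAlgClosed.exists_pow_nat_eq a hn
  have hτ₀0 : τ₀ ≠ 0 := fun h => ha (by rw [← hτ₀, h, zero_pow (by omega)])
  have himg : {τ : ℂ | τ ^ n = a} = (fun ω => τ₀ * ω) '' {ω : ℂ | ω ^ n = 1} := by
    ext τ
    simp only [Set.mem_image, Set.mem_setOf_eq]
    constructor
    · intro h
      refine ⟨τ / τ₀, ?_, by field_simp⟩
      rw [div_pow, h, ← hτ₀, div_self (pow_ne_zero _ hτ₀0)]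
    · rintro ⟨ω, hω, rfl⟩
      rw [mul_pow, hω, mul_one, hτ₀]
  rw [himg, Set.ncard_image_of_injective _ (mul_right_injective₀ hτ₀0)]
  have hset : {ω : ℂ | ω ^ n = 1} = ↑(Polynomial.nthRootsFinset n (1 : ℂ)) := by
    ext ω; rw [Set.mem_setOf_eq, Finset.mem_coe, Polynomial.mem_nthRootsFinset (by omega)]
  rw [hset, Set.ncard_coe_finset]
  exact (Complex.isPrimitiveRoot_exp n (by omega)).card_nthRootsFinset

lemma sphere_compact {c : ℕ} : IsCompact {y : Fin c → ℝ | ∑ i, y i ^ 2 = 1} := by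
  have hcont : Continuous fun y : Fin c → ℝ => ∑ i, y i ^ 2 :=
    continuous_finset_sum _ fun i _ => (continuous_apply i).pow 2
  refine Metric.isCompact_of_isClosed_isBounded (isClosed_eq hcont continuous_const) ?_
  refine (Metric.isBounded_closedBall (x := (0 : Fin c → ℝ)) (r := 1)).subset ?_
  intro y hy
  rw [Metric.mem_closedBall, dist_zero_right]
  rw [pi_norm_le_iff_of_nonneg zero_le_one]
  intro i
  have h1 : y i ^ 2 ≤ 1 := hy ▸ Finset.single_le_sum (fun j _ => sq_nonneg (y j))
    (Finset.mem_univ i)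
  rw [Real.norm_eq_abs]
  exact abs_le.mpr ⟨by nlinarith, by nlinarith⟩

theorem stmt_5 (k c : ℕ) (hk : 3 ≤ k) (hc : 1 ≤ c)
    (V : MvPolynomial (Fin c) ℝ) (hV : V.IsHomogeneous k)
    (hmax : ∃ x : Fin c → ℝ, (∑ i, x i ^ 2) = 1 ∧ MvPolynomial.eval x V ≠ 0) :
    -- (i) every decomposition `z = τ·x` of a point of `Ψ` has `x ∈ Φ` or `−x ∈ Φ`
    (∀ z ∈ PsiSet c V, ∀ (τ : ℂ) (x : Fin c → ℝ), τ ≠ 0 → (∑ i, x i ^ 2) = 1 →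
      z = (fun i => τ * (x i : ℂ)) →
        x ∈ PhiSet c V ∨ (fun i => -x i) ∈ PhiSet c V) ∧
    -- (ii) for every `x ∈ Φ`, the fiber of `Ψ` over `{x, −x}` has exactly `k − 2` elements
    (∀ x ∈ PhiSet c V,
      Set.ncard {z ∈ PsiSet c V | ∃ τ : ℂ, τ ≠ 0 ∧
        (z = (fun i => τ * (x i : ℂ)) ∨ z = fun i => τ * (-(x i) : ℂ))} = k - 2) := by
  classical
  obtain ⟨x₁, hx₁, hV₁⟩ := hmax
  have hn1 : 1 ≤ k - 2 := by omega
  have hn0 : k - 2 ≠ 0 := by omega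
  obtain ⟨x₀, hx₀S, hx₀max⟩ := (sphere_compact (c := c)).exists_isMaxOn
    ⟨x₁, hx₁⟩ ((continuous_abs.comp (continuous_eval_poly V)).continuousOn)
  have hx₀S' : (∑ i, x₀ i ^ 2) = 1 := hx₀S
  have hx₀max' : ∀ y : Fin c → ℝ, (∑ i, y i ^ 2) = 1 → |eval y V| ≤ |eval x₀ V| :=
    fun y hy => hx₀max hy
  have hx₀Φ : x₀ ∈ PhiSet c V := ⟨hx₀S', hx₀max'⟩
  have hMpos : 0 < |eval x₀ V| := lt_of_lt_of_le (abs_pos.mpr hV₁) (hx₀max' x₁ hx₁)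
  have hΦne : ∀ x ∈ PhiSet c V, eval x V ≠ 0 := by
    intro x hx h0
    have h1 := hx.2 x₁ hx₁
    rw [h0, abs_zero] at h1
    exact hV₁ (abs_eq_zero.mp (le_antisymm h1 (abs_nonneg _)))
  have hΦlag : ∀ x ∈ PhiSet c V, ∀ i, eval x (pderiv i V) = k * eval x V * x i :=
    fun x hx => lagrange hV hx.1 hx.2 (hΦne x hx)
  -- abs data for critical points
  have hcritA : ∀ w ∈ critStar c V, ∃ (τ' : ℂ) (x' : Fin c → ℝ),
      w = (fun i => τ' * (x' i : ℂ)) ∧ (∑ i, x' i ^ 2) = 1 ∧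
      ‖τ'‖ ^ (k - 2) * ((k : ℝ) * |eval x' V|) = 1 := by
    rintro w ⟨hw, τ', x', hτ', hx', rfl⟩
    obtain ⟨-, hcl⟩ := (crit_mem_iff hk hV hτ' hx').mp ⟨hw, τ', x', hτ', hx', rfl⟩
    exact ⟨τ', x', rfl, hx', abs_clause hcl⟩
  -- membership in Psi for points built over maximizers
  have hPsiMem : ∀ x ∈ PhiSet c V, ∀ τ : ℂ,
      τ ^ (k - 2) = ((k : ℂ) * ((eval x V : ℝ) : ℂ))⁻¹ →
      ((fun i => τ * (x i : ℂ)) ∈ PsiSet c V ∧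
        ‖τ‖ ^ (k - 2) * ((k : ℝ) * |eval x V|) = 1) := by
    intro x hx τ hτn
    have hb : ((k : ℂ) * ((eval x V : ℝ) : ℂ)) ≠ 0 :=
      mul_ne_zero (Nat.cast_ne_zero.mpr (by omega)) (Complex.ofReal_ne_zero.mpr (hΦne x hx))
    have hτ0 : τ ≠ 0 := by
      intro h; rw [h, zero_pow hn0] at hτn; exact (inv_ne_zero hb) hτn.symm
    have hclause : τ ^ (k - 2) * ((k : ℂ) * ((eval x V : ℝ) : ℂ)) = 1 := by
      rw [hτn]; exact inv_mul_cancel₀ hb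
    have hcrit : (fun i => τ * (x i : ℂ)) ∈ critStar c V :=
      (crit_mem_iff hk hV hτ0 hx.1).mpr ⟨hΦlag x hx, hclause⟩
    have hA : ‖τ‖ ^ (k - 2) * ((k : ℝ) * |eval x V|) = 1 := abs_clause hclause
    refine ⟨⟨hcrit, ?_⟩, hA⟩
    intro w hw
    obtain ⟨τ', x', rfl, hx'1, hA'⟩ := hcritA w hw
    rw [sum_abs_sq τ x hx.1, sum_abs_sq τ' x' hx'1]
    have hle : |eval x' V| ≤ |eval x V| := hx.2 x' hx'1
    have h1 : 0 < (k : ℝ) * |eval x' V| := by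
      rcases lt_or_ge 0 ((k : ℝ) * |eval x' V|) with h | h
      · exact h
      · exfalso
        nlinarith [pow_nonneg (norm_nonneg τ') (k - 2)]
    have h2 : ‖τ‖ ^ (k - 2) ≤ ‖τ'‖ ^ (k - 2) := by
      have hklee : ‖τ‖ ^ (k - 2) * ((k : ℝ) * |eval x' V|)
          ≤ ‖τ‖ ^ (k - 2) * ((k : ℝ) * |eval x V|) :=
        mul_le_mul_of_nonneg_left (mul_le_mul_of_nonneg_left hle (Nat.cast_nonneg k))
          (pow_nonneg (norm_nonneg τ) _)
      nlinarith [hklee, h1, hA, hA']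
    have h3 : ‖τ‖ ≤ ‖τ'‖ :=
      (pow_le_pow_iff_left₀ (norm_nonneg τ) (norm_nonneg τ') hn0).mp h2
    exact pow_le_pow_left₀ (norm_nonneg τ) h3 2
  constructor
  · -- part (i)
    rintro z hz τ x hτ0 hx1 rfl
    obtain ⟨hcl1, hcl2⟩ := (crit_mem_iff hk hV hτ0 hx1).mp hz.1
    have hA : ‖τ‖ ^ (k - 2) * ((k : ℝ) * |eval x V|) = 1 := abs_clause hcl2
    left
    obtain ⟨τ₀, hτ₀n⟩ := IsAlgClosed.exists_pow_nat_eq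
      (((k : ℂ) * ((eval x₀ V : ℝ) : ℂ))⁻¹) (show 0 < k - 2 by omega)
    obtain ⟨hz₀Ψ, hA₀⟩ := hPsiMem x₀ hx₀Φ τ₀ hτ₀n
    have hmin := hz.2 _ hz₀Ψ.1
    rw [sum_abs_sq τ x hx1, sum_abs_sq τ₀ x₀ hx₀S'] at hmin
    have h3 : ‖τ‖ ≤ ‖τ₀‖ :=
      (pow_le_pow_iff_left₀ (norm_nonneg τ) (norm_nonneg τ₀) (two_ne_zero)).mp hmin
    have h4 : ‖τ‖ ^ (k - 2) ≤ ‖τ₀‖ ^ (k - 2) :=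
      pow_le_pow_left₀ (norm_nonneg τ) h3 _
    have h5 : |eval x₀ V| ≤ |eval x V| := by
      have hp₀ : 0 < ‖τ₀‖ ^ (k - 2) := by
        rcases (pow_nonneg (norm_nonneg τ₀) (k - 2)).lt_or_eq with h | h
        · exact h
        · exfalso; rw [← h, zero_mul] at hA₀; norm_num at hA₀
      have hkx : (0:ℝ) ≤ (k : ℝ) * |eval x V| := by positivity
      have hk0 : (0:ℝ) < (k : ℝ) := by
        have : 0 < k := by omega
        exact_mod_cast this
      nlinarith [mul_le_mul_of_nonneg_right h4 hkx, mul_pos hp₀ hk0, hA, hA₀]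
    exact ⟨hx1, fun y hy => le_trans (hx₀max' y hy) h5⟩
  · -- part (ii)
    intro x hxΦ
    have hbV : eval x V ≠ 0 := hΦne x hxΦ
    have hb : ((k : ℂ) * ((eval x V : ℝ) : ℂ)) ≠ 0 :=
      mul_ne_zero (Nat.cast_ne_zero.mpr (by omega)) (Complex.ofReal_ne_zero.mpr hbV)
    set a : ℂ := ((k : ℂ) * ((eval x V : ℝ) : ℂ))⁻¹ with ha
    have ha0 : a ≠ 0 := inv_ne_zero hb
    obtain ⟨i₀, hi₀⟩ : ∃ i, x i ≠ 0 := by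
      by_contra h
      push_neg at h
      have : (∑ i, x i ^ 2) = 0 := by simp [h]
      rw [hxΦ.1] at this; norm_num at this
    have hinj : Function.Injective (fun τ : ℂ => fun i => τ * (x i : ℂ)) := by
      intro s t hst
      have := congrFun hst i₀
      exact mul_right_cancel₀ (Complex.ofReal_ne_zero.mpr hi₀) this
    have hset : {z ∈ PsiSet c V | ∃ τ : ℂ, τ ≠ 0 ∧
        (z = (fun i => τ * (x i : ℂ)) ∨ z = fun i => τ * (-(x i) : ℂ))}
        = (fun τ : ℂ => fun i => τ * (x i : ℂ)) '' {τ : ℂ | τ ^ (k - 2) = a} := by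
      ext z
      simp only [Set.mem_setOf_eq, Set.mem_image]
      constructor
      · rintro ⟨hzΨ, τ, hτ0, hcase⟩
        rcases hcase with rfl | rfl
        · refine ⟨τ, ?_, rfl⟩
          obtain ⟨-, hcl⟩ := (crit_mem_iff hk hV hτ0 hxΦ.1).mp hzΨ.1
          rw [ha]
          exact eq_inv_of_mul_eq_one_left (by linear_combination hcl)
        · have heq2 : (fun i : Fin c => τ * -((x i : ℝ) : ℂ)) = fun i => (-τ) * ((x i : ℝ) : ℂ) := by
            funext i; ring
          refine ⟨-τ, ?_, heq2.symm⟩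
          rw [heq2] at hzΨ
          obtain ⟨-, hcl⟩ := (crit_mem_iff hk hV (neg_ne_zero.mpr hτ0) hxΦ.1).mp hzΨ.1
          rw [ha]
          exact eq_inv_of_mul_eq_one_left (by linear_combination hcl)
      · rintro ⟨τ, hτn, rfl⟩
        have hτ0 : τ ≠ 0 := fun h => ha0 (by rw [← hτn, h, zero_pow hn0])
        exact ⟨(hPsiMem x hxΦ τ hτn).1, τ, hτ0, Or.inl rfl⟩
    rw [hset, Set.ncard_image_of_injective _ hinj, ncard_pow_eq hn1 ha0]
end

section
/- Let z = τ·x with τ ∈ ℂ∖{0} and x ∈ ℝ^c satisfying x_1²+⋯+x_c² = 1, and suppose ∇g(z) = 0. Then V(x) ≠ 0, and for any (c−1)×c real matrix P_x whose rows form an orthonormal basis of the orthogonal complement x^⊥, det( (1/V(x)) · P_x · (Hess V)(x) · P_x^T − k · Id_{c−1} ) = (k^{c−1}/(k−2)) · det((Hess g)(z)). -/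
open MvPolynomial

section AuxLemmas
variable {σ : Type*} [Fintype σ] [DecidableEq σ] {R : Type*} [CommRing R]

lemma degree_eq_sum_univ (d : σ →₀ ℕ) : d.degree = ∑ i : σ, d i :=
  Finset.sum_subset (Finset.subset_univ _) (fun i _ hi => by
    simpa using Finsupp.notMem_support_iff.mp hi)

lemma single_add_tsub (i : σ) (d : σ →₀ ℕ) (h : d i ≠ 0) :
    Finsupp.single i 1 + (d - Finsupp.single i 1) = d := by
  ext j
  by_cases hj : j = i
  · subst hj; simp [Finsupp.single_apply, Finsupp.tsub_apply]; omega
  · simp [Finsupp.single_apply, Finsupp.tsub_apply, hj, Ne.symm hj]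

lemma X_mul_pderiv_monomial (i : σ) (d : σ →₀ ℕ) (r : R) :
    X i * pderiv i (monomial d r) = monomial d (r * d i) := by
  rw [pderiv_monomial]
  by_cases h : d i = 0
  · simp [h]
  · have hX : (X i : MvPolynomial σ R) = monomial (Finsupp.single i 1) 1 := by
      rw [← X_pow_eq_monomial, pow_one]
    rw [hX, monomial_mul, one_mul, single_add_tsub i d h]

lemma euler_poly {n : ℕ} {φ : MvPolynomial σ R} (hφ : φ.IsHomogeneous n) :
    ∑ i : σ, X i * pderiv i φ = C (n : R) * φ := by
  conv_lhs => rw [φ.as_sum]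
  conv_rhs => rw [φ.as_sum]
  simp_rw [map_sum, Finset.mul_sum]
  rw [Finset.sum_comm]
  refine Finset.sum_congr rfl fun d hd => ?_
  have hdeg : d.degree = n := by
    by_contra hne
    exact (mem_support_iff.mp hd) (hφ.coeff_eq_zero hne)
  simp_rw [_root_.X_mul_pderiv_monomial, C_mul_monomial]
  rw [← map_sum (monomial d)]
  congr 1
  rw [← Finset.mul_sum]
  have hc : (∑ i : σ, ((d i : R))) = (n : R) := by
    rw [← Nat.cast_sum, ← degree_eq_sum_univ, hdeg]
  rw [hc, mul_comm]

lemma euler_eval {n : ℕ} {φ : MvPolynomial σ R} (hφ : φ.IsHomogeneous n) (y : σ → R) :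
    ∑ i : σ, y i * eval y (pderiv i φ) = n * eval y φ := by
  have := congrArg (eval y) (euler_poly hφ)
  simpa [eval_C] using this

lemma isHomogeneous_pderiv {n : ℕ} {φ : MvPolynomial σ R} (hφ : φ.IsHomogeneous n) (i : σ) :
    (pderiv i φ).IsHomogeneous (n - 1) := by
  rw [φ.as_sum, map_sum]
  refine IsHomogeneous.sum _ _ _ fun d hd => ?_
  rw [pderiv_monomial]
  by_cases h : d i = 0
  · simp [h]; exact isHomogeneous_zero _ _ _
  · refine isHomogeneous_monomial _ ?_
    have hdeg : d.degree = n := by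
      by_contra hne
      exact (mem_support_iff.mp hd) (hφ.coeff_eq_zero hne)
    rw [degree_eq_sum_univ] at hdeg ⊢
    have key : ∑ j ∈ Finset.univ.erase i, ((d - Finsupp.single i 1 : σ →₀ ℕ)) j
        = ∑ j ∈ Finset.univ.erase i, d j := by
      refine Finset.sum_congr rfl fun j hj => ?_
      have hji : j ≠ i := (Finset.mem_erase.mp hj).1
      simp [Finsupp.tsub_apply, Finsupp.single_apply, Ne.symm hji]
    have e1 : ((d - Finsupp.single i 1 : σ →₀ ℕ)) i = d i - 1 := by
      simp [Finsupp.tsub_apply, Finsupp.single_apply]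
    have s1 := Finset.add_sum_erase Finset.univ (fun j => ((d - Finsupp.single i 1 : σ →₀ ℕ)) j) (Finset.mem_univ i)
    have s2 := Finset.add_sum_erase Finset.univ (fun j => d j) (Finset.mem_univ i)
    omega

lemma eval_mul_homog {n : ℕ} {φ : MvPolynomial σ R} (hφ : φ.IsHomogeneous n) (t : R) (y : σ → R) :
    eval (fun i => t * y i) φ = t ^ n * eval y φ := by
  conv_lhs => rw [φ.as_sum]
  conv_rhs => rw [φ.as_sum]
  rw [map_sum, map_sum, Finset.mul_sum]
  refine Finset.sum_congr rfl fun d hd => ?_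
  have hdeg : d.degree = n := by
    by_contra hne
    exact (mem_support_iff.mp hd) (hφ.coeff_eq_zero hne)
  rw [eval_monomial, eval_monomial]
  rw [Finsupp.prod, Finsupp.prod]
  simp_rw [mul_pow]
  rw [Finset.prod_mul_distrib, Finset.prod_pow_eq_pow_sum]
  rw [← hdeg, Finsupp.degree_apply]
  ring

lemma pderiv_comm (i j : σ) (φ : MvPolynomial σ R) :
    pderiv i (pderiv j φ) = pderiv j (pderiv i φ) := by
  induction φ using MvPolynomial.induction_on' with
  | monomial d r =>
    by_cases hij : i = j
    · subst hij; rfl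
    · simp_rw [pderiv_monomial]
      have hji : ((d - Finsupp.single j 1 : σ →₀ ℕ)) i = d i := by
        simp [Finsupp.tsub_apply, Finsupp.single_apply, Ne.symm hij]
      have hij' : ((d - Finsupp.single i 1 : σ →₀ ℕ)) j = d j := by
        simp [Finsupp.tsub_apply, Finsupp.single_apply, hij]
      rw [hji, hij']
      have : d - Finsupp.single j 1 - Finsupp.single i 1
           = d - Finsupp.single i 1 - Finsupp.single j 1 := by
        ext a; simp [Finsupp.tsub_apply, Finsupp.single_apply]; omega
      rw [this]
      ring_nf
  | add p q hp hq => simp [map_add, hp, hq]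

end AuxLemmas

/-- The Hessian matrix of `g` at `z ∈ ℂ^c`. -/
noncomputable def hessG (c : ℕ) (V : MvPolynomial (Fin c) ℝ) (z : Fin c → ℂ) :
    Matrix (Fin c) (Fin c) ℂ :=
  Matrix.of fun i j =>
    MvPolynomial.eval z (MvPolynomial.pderiv i (MvPolynomial.pderiv j (gC c V)))

/-- The Hessian matrix of `V` at `x ∈ ℝ^c`. -/
noncomputable def hessV (c : ℕ) (V : MvPolynomial (Fin c) ℝ) (x : Fin c → ℝ) :
    Matrix (Fin c) (Fin c) ℝ :=
  Matrix.of fun i j =>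
    MvPolynomial.eval x (MvPolynomial.pderiv i (MvPolynomial.pderiv j V))

theorem stmt_9 (k c : ℕ) (hk : 3 ≤ k) (hc : 1 ≤ c)
    (V : MvPolynomial (Fin c) ℝ) (hV : V.IsHomogeneous k)
    (τ : ℂ) (hτ : τ ≠ 0) (x : Fin c → ℝ) (hx : (∑ i, x i ^ 2) = 1)
    (z : Fin c → ℂ) (hz : z = fun i => τ * (x i : ℂ))
    (hcrit : ∀ i, MvPolynomial.eval z (MvPolynomial.pderiv i (gC c V)) = 0) :
    MvPolynomial.eval x V ≠ 0 ∧
    ∀ P : Matrix (Fin (c - 1)) (Fin c) ℝ,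
      P * P.transpose = 1 → P.mulVec x = 0 →
      ((((MvPolynomial.eval x V)⁻¹ • (P * hessV c V x * P.transpose)
          - (k : ℝ) • 1).det : ℝ) : ℂ)
        = ((k : ℂ) ^ (c - 1) / ((k : ℂ) - 2)) * (hessG c V z).det := by
  subst hz
  set ρ : ℝ →+* ℂ := algebraMap ℝ ℂ with hρ
  set v : ℝ := MvPolynomial.eval x V with hvdef
  -- eval transfer
  have evalx : ∀ q : MvPolynomial (Fin c) ℝ,
      eval (fun i => (x i : ℂ)) (map ρ q) = ((eval x q : ℝ) : ℂ) := by
    intro q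
    rw [eval_map]
    have h := eval₂_comp_left ρ (RingHom.id ℝ) x q
    simp only [RingHomCompTriple.comp_eq] at h
    have hfx : (⇑ρ ∘ x) = fun i => ((x i : ℂ)) := by
      funext i; simp [hρ]
    rw [hfx] at h
    rw [← h]
    rfl
  have hVC : (map ρ V).IsHomogeneous k := hV.map _
  -- first derivative of gC
  have hpg : ∀ i, pderiv i (gC c V) = map ρ (- X i + pderiv i V) := by
    intro i
    rw [gC, pderiv_map]
    congr 1
    rw [map_add, map_neg]
    congr 1
    rw [pderiv_C_mul, map_sum]
    rw [Finset.sum_eq_single i (fun j _ hj => by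
      simp [pderiv_pow, pderiv_X, Pi.single_apply, hj]) (by simp)]
    rw [pderiv_pow, pderiv_X_self, mul_one]
    have h2 : ((2 : ℕ) : MvPolynomial (Fin c) ℝ) = C (2:ℝ) := by
      rw [← C_eq_coe_nat]; norm_num
    rw [h2, show (2 - 1 : ℕ) = 1 from rfl, pow_one, ← mul_assoc, ← C_mul]
    norm_num
  -- gradient at z
  have hgrad : ∀ i, eval (fun i => τ * (x i : ℂ)) (map ρ (pderiv i V)) = τ * x i := by
    intro i
    have h := hcrit i
    rw [hpg i, map_add, map_neg, map_X, map_add, map_neg, eval_X] at h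
    linear_combination h
  have hxC : (∑ i, ((x i : ℂ))^2) = 1 := by
    have := congrArg (Complex.ofReal) hx
    push_cast at this
    exact this
  -- Euler at z
  have hτ2 : τ^2 = (k : ℂ) * τ^k * (v : ℂ) := by
    have he := euler_eval hVC (fun i => τ * (x i : ℂ))
    simp only [pderiv_map, hgrad] at he
    have hL : (∑ i, (τ * (x i:ℂ)) * (τ * x i)) = τ^2 := by
      rw [show (∑ i, (τ * (x i:ℂ)) * (τ * x i)) = τ^2 * ∑ i, ((x i:ℂ))^2 by
        rw [Finset.mul_sum]; exact Finset.sum_congr rfl fun i _ => by ring]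
      rw [hxC, mul_one]
    have hR : eval (fun i => τ * (x i : ℂ)) (map ρ V) = τ^k * (v : ℂ) := by
      rw [eval_mul_homog hVC τ _, evalx V]
    rw [hL, hR] at he
    rw [he]; ring
  have hv0 : (v : ℂ) ≠ 0 := by
    intro h0
    rw [h0, mul_zero] at hτ2
    exact pow_ne_zero 2 hτ hτ2
  have hvR : v ≠ 0 := fun h => hv0 (by rw [h]; norm_num)
  have hk0 : ((k:ℂ)) ≠ 0 := by
    simp only [Ne, Nat.cast_eq_zero]; omega
  have hkv0 : ((k:ℂ)) * v ≠ 0 := mul_ne_zero hk0 hv0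
  have hτk2 : τ^(k-2) = (((k:ℂ)) * v)⁻¹ := by
    have h2 : τ^k = τ^(k-2) * τ^2 := by rw [← pow_add]; congr 1; omega
    have key : ((k:ℂ) * v) * τ^(k-2) = 1 := by
      apply mul_right_cancel₀ (pow_ne_zero 2 hτ)
      rw [one_mul]
      conv_rhs => rw [hτ2, h2]
      ring
    field_simp
    linear_combination key
  -- gradient at x
  have hgx : ∀ j, eval x (pderiv j V) = k * v * x j := by
    intro j
    have hh : (pderiv j V).IsHomogeneous (k-1) := isHomogeneous_pderiv hV j
    have h1 := hgrad j
    rw [eval_mul_homog (hh.map ρ) τ _, evalx] at h1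
    have h2 : τ^(k-1) = τ^(k-2) * τ := by rw [← pow_succ]; congr 1; omega
    rw [h2, hτk2] at h1
    have h3 : ((eval x (pderiv j V) : ℝ) : ℂ) = (k:ℂ) * v * x j := by
      field_simp at h1
      apply mul_left_cancel₀ hτ
      linear_combination τ * h1
    have h4 : ((k * v * x j : ℝ) : ℂ) = (k:ℂ) * v * x j := by push_cast; ring
    exact Complex.ofReal_injective (h3.trans h4.symm)
  set A : Matrix (Fin c) (Fin c) ℝ := hessV c V x with hA
  have hAapp : ∀ i j, A i j = eval x (pderiv i (pderiv j V)) := fun i j => rfl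
  have hAsym : ∀ i j, A i j = A j i := fun i j => by
    rw [hAapp, hAapp, pderiv_comm]
  have hhess2 : ∀ i j, (pderiv i (pderiv j V)).IsHomogeneous (k-2) := by
    intro i j
    have h := isHomogeneous_pderiv (isHomogeneous_pderiv hV j) i
    rwa [show k - 1 - 1 = k - 2 by omega] at h
  set r : ℝ := ((k:ℝ) - 1) * ((k:ℝ) * v) with hrdef
  have hmulVec : A.mulVec x = r • x := by
    funext i
    have he := euler_eval (isHomogeneous_pderiv hV i) x
    have hcomm : ∀ j, eval x (pderiv j (pderiv i V)) = A i j := fun j => by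
      rw [hAapp, pderiv_comm]
    simp only [hcomm] at he
    rw [hgx i] at he
    have hk1 : ((k - 1 : ℕ) : ℝ) = (k:ℝ) - 1 := by
      push_cast [Nat.cast_sub (by omega : 1 ≤ k)]; ring
    rw [hk1] at he
    simp only [Matrix.mulVec, dotProduct, Pi.smul_apply, smul_eq_mul]
    rw [show ∑ j, A i j * x j = ∑ j, x j * A i j from
      Finset.sum_congr rfl fun j _ => mul_comm _ _, he, hrdef]
    ring
  set s : ℝ := ((k:ℝ) * v)⁻¹ with hsdef
  set H : Matrix (Fin c) (Fin c) ℝ := s • A - 1 with hH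
  have hkvR : (k:ℝ) * v ≠ 0 := by
    apply mul_ne_zero _ hvR
    simp only [Ne, Nat.cast_eq_zero]; omega
  have hhessG : hessG c V (fun i => τ * (x i : ℂ)) = H.map (fun t : ℝ => (t : ℂ)) := by
    ext i j
    have hpij : pderiv i (pderiv j (gC c V))
        = map ρ (-(pderiv i (X j)) + pderiv i (pderiv j V)) := by
      rw [hpg j, pderiv_map]
      congr 1
      rw [map_add, map_neg]
    rw [hessG]
    simp only [Matrix.of_apply, hpij, map_add, map_neg]
    rw [eval_mul_homog ((hhess2 i j).map ρ) τ _, evalx, hτk2, ← hAapp i j]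
    have hXij : eval (fun i => τ * (x i : ℂ)) (map ρ (pderiv i (X j)))
        = if i = j then 1 else 0 := by
      rw [pderiv_X]
      by_cases hij : i = j
      · subst hij; simp
      · simp [Pi.single_apply, hij]
    rw [hXij]
    simp only [Matrix.map_apply, hH, Matrix.sub_apply, Matrix.smul_apply, Matrix.one_apply,
      hsdef, smul_eq_mul]
    push_cast
    by_cases hij : i = j <;> simp [hij, mul_inv] <;> ring
  have hdetG : (hessG c V (fun i => τ * (x i : ℂ))).det = ((H.det : ℝ) : ℂ) := by
    rw [hhessG]
    rw [show (fun t : ℝ => (t : ℂ)) = ⇑(algebraMap ℝ ℂ) from rfl]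
    have hmd := RingHom.map_det (algebraMap ℝ ℂ) H
    rw [RingHom.mapMatrix_apply] at hmd
    rw [← hmd]
    rfl
  refine ⟨hvR, ?_⟩
  intro P hP hPx
  set T : Matrix (Fin (c-1)) (Fin (c-1)) ℝ := s • (P * A * P.transpose) - 1 with hT
  set X1 : Matrix (Fin 1) (Fin c) ℝ := Matrix.of (fun _ j => x j) with hX1
  have hPX : P * X1.transpose = 0 := by
    ext i j
    have := congrFun hPx i
    simpa [Matrix.mul_apply, hX1, Matrix.transpose_apply, Matrix.mulVec,
      dotProduct] using this
  have hXP : X1 * P.transpose = 0 := by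
    ext i j
    have := congrFun hPx j
    simp only [Matrix.mulVec, dotProduct] at this
    have this2 : ∑ l, P j l * x l = 0 := by simpa using this
    simp only [Matrix.mul_apply, hX1, Matrix.transpose_apply, Matrix.of_apply,
      Matrix.zero_apply]
    rw [← this2]
    exact Finset.sum_congr rfl fun l _ => mul_comm _ _
  have hXX : X1 * X1.transpose = 1 := by
    ext i j
    have hij : i = j := Subsingleton.elim i j
    subst hij
    simp only [Matrix.mul_apply, hX1, Matrix.transpose_apply, Matrix.of_apply,
      Matrix.one_apply_eq]
    rw [← hx]
    exact Finset.sum_congr rfl fun l _ => (sq (x l)).symm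
  have hAX : A * X1.transpose = r • X1.transpose := by
    ext i j
    have := congrFun hmulVec i
    simp only [Matrix.mulVec, dotProduct, Pi.smul_apply, smul_eq_mul] at this
    simp only [Matrix.mul_apply, hX1, Matrix.transpose_apply, Matrix.of_apply,
      Matrix.smul_apply, smul_eq_mul]
    exact this
  have hXA : X1 * A = r • X1 := by
    ext i j
    have := congrFun hmulVec j
    simp only [Matrix.mulVec, dotProduct, Pi.smul_apply, smul_eq_mul] at this
    simp only [Matrix.mul_apply, hX1, Matrix.of_apply, Matrix.smul_apply, smul_eq_mul]
    rw [← this]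
    exact Finset.sum_congr rfl fun l _ => by rw [hAsym l j]; ring
  have hsr : s * r = (k:ℝ) - 1 := by
    rw [hsdef, hrdef]
    field_simp
  have hHX : H * X1.transpose = ((k:ℝ) - 2) • X1.transpose := by
    rw [hH, Matrix.sub_mul, Matrix.smul_mul, hAX, Matrix.one_mul, smul_smul, hsr]
    module
  have hXH : X1 * H = ((k:ℝ) - 2) • X1 := by
    rw [hH, Matrix.mul_sub, Matrix.mul_smul, hXA, Matrix.mul_one, smul_smul, hsr]
    module
  set Q : Matrix (Fin (c-1) ⊕ Fin 1) (Fin c) ℝ := Matrix.fromRows P X1 with hQ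
  have hQQ : Q * Q.transpose = 1 := by
    rw [hQ, Matrix.transpose_fromRows, Matrix.fromRows_mul_fromCols, hP, hPX, hXP, hXX,
      Matrix.fromBlocks_one]
  have b11 : P * H * P.transpose = T := by
    rw [hH, Matrix.mul_sub, Matrix.mul_smul, Matrix.mul_one, Matrix.sub_mul,
      Matrix.smul_mul, hP, hT, Matrix.mul_assoc]
  have b12 : P * H * X1.transpose = 0 := by
    rw [Matrix.mul_assoc, hHX, Matrix.mul_smul, hPX, smul_zero]
  have b21 : X1 * H * P.transpose = 0 := by
    rw [hXH, Matrix.smul_mul, hXP, smul_zero]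
  have b22 : X1 * H * X1.transpose = ((k:ℝ) - 2) • 1 := by
    rw [Matrix.mul_assoc, hHX, Matrix.mul_smul, hXX]
  have hQHQ : Q * H * Q.transpose = Matrix.fromBlocks T 0 0 (((k:ℝ) - 2) • 1) := by
    rw [hQ, Matrix.transpose_fromRows, Matrix.fromRows_mul,
      Matrix.fromRows_mul_fromCols, b11, b12, b21, b22]
  have e : (Fin (c-1) ⊕ Fin 1) ≃ Fin c := finSumFinEquiv.trans (finCongr (by omega))
  set Q2 : Matrix (Fin c) (Fin c) ℝ := Q.submatrix e.symm id with hQ2def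
  have hQ2Q2 : Q2 * Q2.transpose = 1 := by
    have h7 : Q2 * Q2.transpose = (Q * Q.transpose).submatrix e.symm e.symm := by
      ext a b
      simp [Matrix.mul_apply, hQ2def]
    rw [h7, hQQ, Matrix.submatrix_one_equiv]
  have hQ2HQ2 : Q2 * H * Q2.transpose = (Q * H * Q.transpose).submatrix e.symm e.symm := by
    ext a b
    simp [Matrix.mul_apply, hQ2def, Finset.sum_mul]
  have hdetH : H.det = T.det * ((k:ℝ) - 2) := by
    have h6 : Q2.det * Q2.det = 1 := by
      have h8 := congrArg Matrix.det hQ2Q2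
      rwa [Matrix.det_mul, Matrix.det_transpose, Matrix.det_one] at h8
    have h5 : (Q2 * H * Q2.transpose).det = H.det := by
      rw [Matrix.det_mul, Matrix.det_mul, Matrix.det_transpose]
      calc Q2.det * H.det * Q2.det = (Q2.det * Q2.det) * H.det := by ring
        _ = H.det := by rw [h6, one_mul]
    rw [← h5, hQ2HQ2, Matrix.det_submatrix_equiv_self, hQHQ,
      Matrix.det_fromBlocks_zero₂₁]
    congr 1
    rw [Matrix.det_smul, Matrix.det_one]
    simp
  have hB : (v⁻¹ • (P * A * P.transpose) - (k:ℝ) • 1) = (k:ℝ) • T := by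
    rw [hT, smul_sub, smul_smul]
    congr 2
    rw [hsdef]
    field_simp
  have hkR : (k:ℝ) ≠ 0 := by
    simp only [Ne, Nat.cast_eq_zero]; omega
  have hdetB : ((k:ℝ) • T).det = (k:ℝ)^(c-1) * T.det := by
    rw [Matrix.det_smul]
    congr 2
    simp
  have hk2C : ((k:ℂ)) - 2 ≠ 0 := sub_ne_zero.mpr (by
    intro h
    have : (k : ℝ) = 2 := by exact_mod_cast congrArg Complex.re h
    have : k = 2 := by exact_mod_cast this
    omega)
  rw [hdetG, hB, hdetB, hdetH]
  push_cast
  field_simp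
end

section
/- Let 1 ≤ k ≤ c be integers. For every x ∈ ℝ^c with x_1² + ⋯ + x_c² = 1 one has |e_k(x)| ≤ binom(c,k) · c^{−k/2}, and equality holds at x = (c^{−1/2}, …, c^{−1/2}); that is, the maximum of |e_k| over the unit sphere S^{c−1} equals binom(c,k) · c^{−k/2} and is attained at the uniform point. -/
section Aux
open Polynomial Finset

-- AM-GM for a multiset
lemma multiset_amgm (T : Multiset ℝ) (hT : ∀ a ∈ T, 0 ≤ a) (h0 : T ≠ 0) :
    T.prod ≤ (T.sum / Multiset.card T) ^ (Multiset.card T) := by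
  classical
  obtain ⟨l, rfl⟩ : ∃ l : List ℝ, (l : Multiset ℝ) = T := ⟨T.toList, Multiset.coe_toList T⟩
  set n := l.length with hn
  have hprod : (l : Multiset ℝ).prod = ∏ i : Fin n, l.get i := by
    rw [Multiset.prod_coe, ← List.prod_ofFn, List.ofFn_get]
  have hsum : (l : Multiset ℝ).sum = ∑ i : Fin n, l.get i := by
    rw [Multiset.sum_coe, ← List.sum_ofFn, List.ofFn_get]
  have hcard : Multiset.card (l : Multiset ℝ) = n := by simp [hn]
  have hnpos : 0 < n := by
    rcases Nat.eq_zero_or_pos n with h | h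
    · exact absurd (by simpa [← Multiset.card_eq_zero, hcard] using h) h0
    · exact h
  have hnn : ∀ i : Fin n, 0 ≤ l.get i := fun i => hT _ (by simp [List.get_mem])
  have amgm := Real.geom_mean_le_arith_mean_weighted Finset.univ
      (fun _ : Fin n => 1 / n) (fun i => l.get i)
      (fun i _ => by positivity)
      (by simp [Finset.card_univ]; field_simp)
      (fun i _ => hnn i)
  have hprodpow : ∏ i : Fin n, (l.get i) ^ ((1 : ℝ) / n) =
      (∏ i : Fin n, l.get i) ^ ((1 : ℝ) / n) := by
    rw [← Real.finset_prod_rpow _ _ (fun i _ => hnn i)]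
  rw [hprodpow] at amgm
  have hsum' : ∑ i : Fin n, (1 / (n : ℝ)) * l.get i = (∑ i : Fin n, l.get i) / n := by
    rw [Finset.sum_div, Finset.sum_congr rfl (fun i _ => ?_)]; ring
  rw [hsum'] at amgm
  have hPnn : 0 ≤ ∏ i : Fin n, l.get i := Finset.prod_nonneg fun i _ => hnn i
  calc (l : Multiset ℝ).prod = ((∏ i : Fin n, l.get i) ^ ((1:ℝ)/n)) ^ (n : ℕ) := by
        rw [← Real.rpow_natCast ((∏ i : Fin n, l.get i) ^ ((1:ℝ)/n)) n,
          ← Real.rpow_mul hPnn]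
        rw [one_div, inv_mul_cancel₀ (by exact_mod_cast hnpos.ne')]
        rw [Real.rpow_one, hprod]
    _ ≤ ((∑ i : Fin n, l.get i) / n) ^ (n : ℕ) := by
        apply pow_le_pow_left₀ (Real.rpow_nonneg hPnn _) amgm
    _ = ((l : Multiset ℝ).sum / Multiset.card (l : Multiset ℝ)) ^ (Multiset.card (l : Multiset ℝ)) := by
        rw [hsum, hcard]


lemma esymm_card_eq_prod (T : Multiset ℝ) : T.esymm (Multiset.card T) = T.prod := by
  have h1 : T.powersetCard (Multiset.card T) = {T} := by
    have hc : Multiset.card (T.powersetCard (Multiset.card T)) = 1 := by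
      rw [Multiset.card_powersetCard, Nat.choose_self]
    obtain ⟨a, ha⟩ := Multiset.card_eq_one.1 hc
    have haT : a = T := by
      have : a ∈ T.powersetCard (Multiset.card T) := by rw [ha]; simp
      rw [Multiset.mem_powersetCard] at this
      exact Multiset.eq_of_le_of_card_le this.1 (le_of_eq this.2.symm)
    rw [ha, haT]
  rw [Multiset.esymm, h1]
  simp

lemma esymm_one_eq_sum (T : Multiset ℝ) : T.esymm 1 = T.sum := by
  rw [Multiset.esymm, Multiset.powersetCard_one, Multiset.map_map]
  simp

lemma esymm_nonneg (T : Multiset ℝ) (hT : ∀ a ∈ T, 0 ≤ a) (j : ℕ) : 0 ≤ T.esymm j := by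
  rw [Multiset.esymm]
  apply Multiset.sum_nonneg
  intro x hx
  rw [Multiset.mem_map] at hx
  obtain ⟨u, hu, rfl⟩ := hx
  rw [Multiset.mem_powersetCard] at hu
  exact Multiset.prod_nonneg fun a ha => hT a (Multiset.mem_of_le hu.1 ha)


lemma maclaurin (c k : ℕ) (hk : 1 ≤ k) (hkc : k ≤ c) (y : Fin c → ℝ) (hy : ∀ i, 0 ≤ y i) :
    (Multiset.map y Finset.univ.val).esymm k ≤ (c.choose k) * ((∑ i, y i) / c) ^ k := by
  classical
  set t : Multiset ℝ := Multiset.map y Finset.univ.val with ht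
  have hct : Multiset.card t = c := by simp [ht]
  have htnn : ∀ a ∈ t, 0 ≤ a := by
    intro a ha; rw [ht, Multiset.mem_map] at ha; obtain ⟨i, _, rfl⟩ := ha; exact hy i
  set P : ℝ[X] := (t.map fun a => X + C a).prod with hP
  have hcoeff : ∀ m, m ≤ c → P.coeff m = t.esymm (c - m) := by
    intro m hm
    rw [hP, Multiset.prod_X_add_C_coeff t (hct ▸ hm), hct]
  have hroots : P.roots = t.map Neg.neg := by
    have h2 : ∀ s : Multiset ℝ, ((s.map Neg.neg).map fun a => X - C a) = s.map fun a => X + C a := by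
      intro s
      rw [Multiset.map_map]
      apply Multiset.map_congr rfl
      intro a _
      simp [sub_neg_eq_add]
    rw [hP, ← h2 t, roots_multiset_prod_X_sub_C]
  have hcroots : Multiset.card P.roots = c := by rw [hroots, Multiset.card_map, hct]
  have hdeg : P.natDegree = c := by
    refine le_antisymm ?_ ?_
    · refine le_trans (natDegree_multiset_prod_le _) ?_
      rw [Multiset.map_map]
      have : Multiset.map (natDegree ∘ fun a => X + C a) t = Multiset.replicate c 1 := by
        rw [Multiset.eq_replicate]
        constructor
        · rw [Multiset.card_map, hct]
        · intro b hb
          rw [Multiset.mem_map] at hb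
          obtain ⟨a, _, rfl⟩ := hb
          exact natDegree_X_add_C a
      rw [this, Multiset.sum_replicate, smul_eq_mul, mul_one]
    · rw [← hcroots]; exact P.card_roots'
  set d : ℕ := c - k with hd
  set Q : ℝ[X] := derivative^[d] P with hQ
  have hQcoeff : ∀ m, Q.coeff m = ((m + d).descFactorial d : ℝ) * P.coeff (m + d) := by
    intro m
    rw [hQ, Polynomial.coeff_iterate_derivative, nsmul_eq_mul]
  have hkd : k + d = c := by omega
  have hQk : Q.coeff k = (c.descFactorial d : ℝ) := by
    have he0 : t.esymm 0 = 1 := by simp [Multiset.esymm]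
    rw [hQcoeff, hkd, hcoeff c le_rfl, Nat.sub_self, he0, mul_one]
  have hQkpos : 0 < Q.coeff k := by
    rw [hQk]
    have : c.descFactorial d ≠ 0 := by
      rw [Ne, Nat.descFactorial_eq_zero_iff_lt]; omega
    exact_mod_cast Nat.pos_of_ne_zero this
  have hQne : Q ≠ 0 := fun h => by simp [h] at hQkpos
  have hQdeg : Q.natDegree = k := by
    refine le_antisymm ?_ (le_natDegree_of_ne_zero hQkpos.ne')
    calc Q.natDegree ≤ P.natDegree - d := natDegree_iterate_derivative P d
      _ = k := by omega
  have hrootsge : ∀ j : ℕ, c - j ≤ Multiset.card (derivative^[j] P).roots := by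
    intro j
    induction j with
    | zero => simp [hcroots]
    | succ j ih =>
      have := Polynomial.card_roots_le_derivative (derivative^[j] P)
      rw [← Function.iterate_succ_apply' (⇑derivative) j P] at this
      simp only [Nat.succ_eq_add_one] at this
      omega
  have hQcard : Multiset.card Q.roots = Q.natDegree := by
    refine le_antisymm Q.card_roots' ?_
    rw [hQdeg]
    calc k = c - d := by omega
      _ ≤ _ := hrootsge d
  have hPnn : ∀ m, 0 ≤ P.coeff m := by
    intro m
    by_cases h : m ≤ c
    · rw [hcoeff m h]
      -- esymm nonneg
      apply Multiset.sum_nonneg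
      intro x hx
      rw [Multiset.mem_map] at hx
      obtain ⟨u, hu, rfl⟩ := hx
      rw [Multiset.mem_powersetCard] at hu
      exact Multiset.prod_nonneg fun a ha => htnn a (Multiset.mem_of_le hu.1 ha)
    · rw [coeff_eq_zero_of_natDegree_lt (by omega : P.natDegree < m)]
  have hQnn : ∀ m, 0 ≤ Q.coeff m := fun m => by
    rw [hQcoeff]; exact mul_nonneg (by positivity) (hPnn _)
  have hrle : ∀ r ∈ Q.roots, r ≤ 0 := by
    intro r hr
    by_contra hpos
    push_neg at hpos
    have hr0 : Q.eval r = 0 := (Polynomial.mem_roots hQne).1 hr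
    have heval : Q.eval r = ∑ m ∈ Finset.range (k + 1), Q.coeff m * r ^ m :=
      eval_eq_sum_range' (by omega : Q.natDegree < k + 1) r
    have hlb : Q.coeff k * r ^ k ≤ ∑ m ∈ Finset.range (k + 1), Q.coeff m * r ^ m := by
      apply Finset.single_le_sum (f := fun m => Q.coeff m * r ^ m)
      · intro m _
        exact mul_nonneg (hQnn m) (by positivity)
      · simp
    have : 0 < Q.eval r := by
      rw [heval]
      calc (0:ℝ) < Q.coeff k * r ^ k := by positivity
        _ ≤ _ := hlb
    linarith
  -- negated roots
  set T : Multiset ℝ := Q.roots.map (fun r => -r) with hT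
  have hTcard : Multiset.card T = k := by rw [hT, Multiset.card_map, hQcard, hQdeg]
  have hTnn : ∀ a ∈ T, 0 ≤ a := by
    intro a ha
    rw [hT, Multiset.mem_map] at ha
    obtain ⟨r, hr, rfl⟩ := ha
    linarith [hrle r hr]
  have hQr : Q.roots = T.map Neg.neg := by
    rw [hT, Multiset.map_map]
    simp
  have hL : Q.leadingCoeff = (c.descFactorial d : ℝ) := by
    rw [Polynomial.leadingCoeff, hQdeg, hQk]
  have hv0 : Q.coeff 0 = Q.leadingCoeff * (-1 : ℝ) ^ k * Q.roots.esymm k := by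
    have h := Polynomial.coeff_eq_esymm_roots_of_card hQcard (k := 0) (by omega)
    rwa [hQdeg, Nat.sub_zero] at h
  have hv1 : Q.coeff (k - 1) = Q.leadingCoeff * (-1 : ℝ) ^ 1 * Q.roots.esymm 1 := by
    have h := Polynomial.coeff_eq_esymm_roots_of_card hQcard (k := k - 1) (by omega)
    rwa [hQdeg, (by omega : k - (k - 1) = 1)] at h
  have hesk : Q.roots.esymm k = (-1 : ℝ) ^ k * T.esymm k := by
    rw [hQr, Multiset.esymm_neg]
  have hes1 : Q.roots.esymm 1 = (-1 : ℝ) ^ 1 * T.esymm 1 := by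
    rw [hQr, Multiset.esymm_neg]
  have hTprod : T.esymm k = T.prod := by rw [← hTcard]; exact esymm_card_eq_prod T
  have hTsum1 : T.esymm 1 = T.sum := esymm_one_eq_sum T
  have hd_le : d ≤ c := by omega
  set S : ℝ := ∑ i, y i with hSdef
  have htsum : t.sum = S := by rw [hSdef]; rfl
  -- two expressions for coeff 0
  have heq0 : (d.factorial : ℝ) * t.esymm k = (c.descFactorial d : ℝ) * T.prod := by
    have h1 : Q.coeff 0 = (d.descFactorial d : ℝ) * t.esymm k := by
      rw [hQcoeff, Nat.zero_add, hcoeff d hd_le, (by omega : c - d = k)]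
    rw [Nat.descFactorial_self] at h1
    have hcancel : ((-1:ℝ)) ^ k * ((-1:ℝ)) ^ k = 1 := by rw [← mul_pow]; norm_num
    have h2 : Q.coeff 0 = (c.descFactorial d : ℝ) * T.prod := by
      rw [hv0, hL, hesk, hTprod]
      linear_combination (c.descFactorial d : ℝ) * T.prod * hcancel
    rw [← h1, h2]
  -- two expressions for coeff (k-1)
  have heq1 : ((c - 1).descFactorial d : ℝ) * S = (c.descFactorial d : ℝ) * T.sum := by
    have h1 : Q.coeff (k - 1) = ((c - 1).descFactorial d : ℝ) * S := by
      rw [hQcoeff, (by omega : k - 1 + d = c - 1), hcoeff (c - 1) (by omega),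
        (by omega : c - (c - 1) = 1), esymm_one_eq_sum, htsum]
    have h2 : Q.coeff (k - 1) = (c.descFactorial d : ℝ) * T.sum := by
      rw [hv1, hL, hes1, hTsum1]; ring
    rw [← h1, h2]
  -- nat identities
  have hdf : c.descFactorial d = d.factorial * c.choose k := by
    rw [Nat.descFactorial_eq_factorial_mul_choose, hd, Nat.choose_symm hkc]
  have hratio : c * (c - 1).descFactorial d = k * c.descFactorial d := by
    rw [Nat.descFactorial_eq_factorial_mul_choose, Nat.descFactorial_eq_factorial_mul_choose]
    have h1 : (c - 1).choose d = (c - 1).choose (k - 1) := by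
      rw [show d = (c - 1) - (k - 1) from by omega]
      exact Nat.choose_symm (by omega)
    have h2 : c * (c - 1).choose (k - 1) = c.choose k * k := by
      have h := Nat.add_one_mul_choose_eq (c - 1) (k - 1)
      rwa [show c - 1 + 1 = c from by omega, show k - 1 + 1 = k from by omega] at h
    have h3 : c.choose d = c.choose k := by rw [hd]; exact Nat.choose_symm hkc
    rw [h1, h3]
    calc c * (d.factorial * (c - 1).choose (k - 1))
        = d.factorial * (c * (c - 1).choose (k - 1)) := by ring
      _ = d.factorial * (c.choose k * k) := by rw [h2]
      _ = k * (d.factorial * c.choose k) := by ring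
  have hBpos : (0 : ℝ) < (c.descFactorial d : ℝ) := by rw [← hQk]; exact hQkpos
  have hc1 : 1 ≤ c := le_trans hk hkc
  have hcR : (0:ℝ) < c := by exact_mod_cast hc1
  have hkR : (0:ℝ) < k := by exact_mod_cast hk
  -- T.sum / k = S / c
  have hTsumval : (c : ℝ) * T.sum = (k : ℝ) * S := by
    have hr2 : (c : ℝ) * ((c - 1).descFactorial d : ℝ) = (k : ℝ) * (c.descFactorial d : ℝ) := by
      exact_mod_cast hratio
    refine mul_left_cancel₀ hBpos.ne' ?_
    calc (c.descFactorial d : ℝ) * ((c:ℝ) * T.sum)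
          = (c:ℝ) * ((c.descFactorial d : ℝ) * T.sum) := by ring
        _ = (c:ℝ) * (((c - 1).descFactorial d : ℝ) * S) := by rw [heq1]
        _ = ((c:ℝ) * ((c - 1).descFactorial d : ℝ)) * S := by ring
        _ = ((k:ℝ) * (c.descFactorial d : ℝ)) * S := by rw [hr2]
        _ = (c.descFactorial d : ℝ) * ((k:ℝ) * S) := by ring
  have hdiv : T.sum / (k : ℝ) = S / (c : ℝ) := by
    field_simp
    linear_combination hTsumval
  -- e_k = choose * T.prod
  have hek : t.esymm k = (c.choose k : ℝ) * T.prod := by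
    have hdfR : (c.descFactorial d : ℝ) = (d.factorial : ℝ) * (c.choose k : ℝ) := by
      exact_mod_cast hdf
    apply mul_left_cancel₀ (show (d.factorial : ℝ) ≠ 0 by exact_mod_cast d.factorial_ne_zero)
    rw [heq0, hdfR]; ring
  -- AM-GM
  have hTne : T ≠ 0 := by
    rw [← Multiset.card_pos, hTcard]; omega
  have hamgm := multiset_amgm T hTnn hTne
  rw [hTcard] at hamgm
  calc t.esymm k = (c.choose k : ℝ) * T.prod := hek
    _ ≤ (c.choose k : ℝ) * (T.sum / (k:ℝ)) ^ k :=
        mul_le_mul_of_nonneg_left hamgm (by positivity)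
    _ = (c.choose k : ℝ) * (S / (c:ℝ)) ^ k := by rw [hdiv]

open MvPolynomial in
lemma eval_esymm_eq_sum (c k : ℕ) (x : Fin c → ℝ) :
    MvPolynomial.eval x (MvPolynomial.esymm (Fin c) ℝ k) =
      ∑ T ∈ Finset.powersetCard k Finset.univ, ∏ i ∈ T, x i := by
  simp [MvPolynomial.esymm, MvPolynomial.eval_sum, MvPolynomial.eval_prod]

lemma rpow_half_pow (c k : ℕ) (hc : 0 < c) :
    ((c : ℝ) ^ (-(1 : ℝ) / 2)) ^ k = (c : ℝ) ^ (-(k : ℝ) / 2) := by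
  have hcR : (0:ℝ) < c := by exact_mod_cast hc
  rw [← Real.rpow_natCast ((c:ℝ) ^ (-(1:ℝ)/2)) k, ← Real.rpow_mul hcR.le]
  congr 1
  ring


end Aux

open MvPolynomial

theorem stmt_14 (k c : ℕ) (hk : 1 ≤ k) (hkc : k ≤ c) :
    (∀ x : Fin c → ℝ, (∑ i, x i ^ 2) = 1 →
      |MvPolynomial.eval x (MvPolynomial.esymm (Fin c) ℝ k)| ≤
        (Nat.choose c k : ℝ) * (c : ℝ) ^ (-(k : ℝ) / 2)) ∧
    (∑ _i : Fin c, ((c : ℝ) ^ (-(1 : ℝ) / 2)) ^ 2) = 1 ∧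
    MvPolynomial.eval (fun _ => (c : ℝ) ^ (-(1 : ℝ) / 2)) (MvPolynomial.esymm (Fin c) ℝ k) =
      (Nat.choose c k : ℝ) * (c : ℝ) ^ (-(k : ℝ) / 2) := by
  have hc : 0 < c := lt_of_lt_of_le hk hkc
  have hcR : (0:ℝ) < c := by exact_mod_cast hc
  refine ⟨?_, ?_, ?_⟩
  · intro x hx
    set y : Fin c → ℝ := fun i => |x i| with hy
    have hynn : ∀ i, 0 ≤ y i := fun i => abs_nonneg _
    have habs : |MvPolynomial.eval x (MvPolynomial.esymm (Fin c) ℝ k)| ≤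
        (Multiset.map y Finset.univ.val).esymm k := by
      rw [eval_esymm_eq_sum, Finset.esymm_map_val]
      refine le_trans (Finset.abs_sum_le_sum_abs _ _) ?_
      apply Finset.sum_le_sum
      intro T _
      rw [Finset.abs_prod]
    have hmac := maclaurin c k hk hkc y hynn
    have hsum_sq : ∑ i, y i ^ 2 = 1 := by
      rw [← hx]
      exact Finset.sum_congr rfl fun i _ => sq_abs (x i)
    have hsums : (∑ i, y i) ≤ Real.sqrt c := by
      have h1 : (∑ i, y i) ^ 2 ≤ (c : ℝ) := by
        have := sq_sum_le_card_mul_sum_sq (s := (Finset.univ : Finset (Fin c))) (f := y)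
        rw [hsum_sq] at this
        simpa using this
      calc (∑ i, y i) = Real.sqrt ((∑ i, y i) ^ 2) :=
            (Real.sqrt_sq (Finset.sum_nonneg fun i _ => hynn i)).symm
        _ ≤ Real.sqrt c := Real.sqrt_le_sqrt h1
    have hhalf : Real.sqrt c / c = (c : ℝ) ^ (-(1:ℝ)/2) := by
      rw [Real.sqrt_eq_rpow, show (-(1:ℝ)/2) = (1:ℝ)/2 - 1 by ring, Real.rpow_sub hcR,
        Real.rpow_one]
    have hdivle : (∑ i, y i) / c ≤ (c : ℝ) ^ (-(1:ℝ)/2) := by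
      rw [← hhalf]
      gcongr
    calc |MvPolynomial.eval x (MvPolynomial.esymm (Fin c) ℝ k)|
        ≤ (Multiset.map y Finset.univ.val).esymm k := habs
      _ ≤ (c.choose k : ℝ) * ((∑ i, y i) / c) ^ k := hmac
      _ ≤ (c.choose k : ℝ) * ((c : ℝ) ^ (-(1:ℝ)/2)) ^ k := by
          apply mul_le_mul_of_nonneg_left _ (by positivity)
          apply pow_le_pow_left₀ (by positivity) hdivle
      _ = (c.choose k : ℝ) * (c : ℝ) ^ (-(k:ℝ)/2) := by rw [rpow_half_pow c k hc]
  · rw [Finset.sum_const, Finset.card_univ, Fintype.card_fin, nsmul_eq_mul]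
    rw [rpow_half_pow c 2 hc]
    rw [show (-(2:ℕ):ℝ)/2 = -1 by norm_num, Real.rpow_neg_one]
    exact mul_inv_cancel₀ hcR.ne'
  · rw [eval_esymm_eq_sum]
    have : ∀ T ∈ Finset.powersetCard k (Finset.univ : Finset (Fin c)),
        (∏ _i ∈ T, ((c:ℝ) ^ (-(1:ℝ)/2))) = ((c:ℝ) ^ (-(1:ℝ)/2)) ^ k := by
      intro T hT
      rw [Finset.prod_const, (Finset.mem_powersetCard_univ.1 hT)]
    rw [Finset.sum_congr rfl this, Finset.sum_const, Finset.card_powersetCard,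
      Finset.card_univ, Fintype.card_fin, nsmul_eq_mul, rpow_half_pow c k hc]
end
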